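/- arXiv:2404.04288 — 5 statements merged into one kernel-verified Lean document; each statement's English description precedes it below -/
import Mathlib

section
/- Let z ∈ ℂ and let g : ℝ → ℂ be a Lebesgue measurable function such that t ↦ e^{-z t} g(t) is Lebesgue integrable on (0,∞). Let f : ℂ → ℂ satisfy f(w) = ∫₀^∞ e^{-w t} g(t) dt for every w ∈ ℂ with Re(w) ≥ Re(z). Then for every n ∈ ℕ and every real h > 0, Δ_h^n[f](z) = ∫₀^∞ e^{-z t} (e^{-h t} − 1)^n g(t) dt. -/
open MeasureTheory Filter Finset Topology

noncomputable section

theorem forward_difference_laplace_formula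
    (z : ℂ) (g : ℝ → ℂ) (hg : Measurable g)
    (hint : IntegrableOn (fun t : ℝ => Complex.exp (-z * t) * g t) (Set.Ioi 0))
    (f : ℂ → ℂ)
    (hf : ∀ w : ℂ, z.re ≤ w.re →
      f w = ∫ t in Set.Ioi (0 : ℝ), Complex.exp (-w * t) * g t)
    (n : ℕ) (h : ℝ) (hh : 0 < h) :
    ∑ k ∈ Finset.range (n + 1),
        (n.choose k : ℂ) * (-1) ^ (n - k) * f (z + (k : ℂ) * (h : ℂ))
      = ∫ t in Set.Ioi (0 : ℝ),
          Complex.exp (-z * t) * (Complex.exp (-(h : ℂ) * t) - 1) ^ n * g t := by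
  have key : ∀ k : ℕ, IntegrableOn
      (fun t : ℝ => Complex.exp (-(z + (k : ℂ) * (h : ℂ)) * t) * g t) (Set.Ioi 0) := by
    intro k
    apply Integrable.mono' hint.norm
    · exact ((Complex.measurable_exp.comp
        (measurable_const.mul Complex.measurable_ofReal)).mul hg).aestronglyMeasurable
    · filter_upwards [ae_restrict_mem measurableSet_Ioi] with t ht
      rw [norm_mul, norm_mul]
      gcongr
      rw [Complex.norm_exp, Complex.norm_exp]
      apply Real.exp_le_exp.mpr
      have h1 : ∀ w : ℂ, (-w * (t : ℂ)).re = -w.re * t := by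
        intro w; simp [Complex.mul_re]
      rw [h1, h1]
      have ht' : (0 : ℝ) < t := ht
      have hk : (0 : ℝ) ≤ (k : ℝ) * h := by positivity
      have : ((z + (k : ℂ) * (h : ℂ))).re = z.re + (k : ℝ) * h := by
        simp [Complex.add_re, Complex.mul_re]
      rw [this]
      nlinarith
  have hre : ∀ k : ℕ, z.re ≤ (z + (k : ℂ) * (h : ℂ)).re := by
    intro k
    have : ((z + (k : ℂ) * (h : ℂ))).re = z.re + (k : ℝ) * h := by
      simp [Complex.add_re, Complex.mul_re]
    rw [this]
    have : (0 : ℝ) ≤ (k : ℝ) * h := by positivity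
    linarith
  calc ∑ k ∈ Finset.range (n + 1),
        (n.choose k : ℂ) * (-1) ^ (n - k) * f (z + (k : ℂ) * (h : ℂ))
      = ∑ k ∈ Finset.range (n + 1), ∫ t in Set.Ioi (0 : ℝ),
          (n.choose k : ℂ) * (-1) ^ (n - k) *
            (Complex.exp (-(z + (k : ℂ) * (h : ℂ)) * t) * g t) := by
        refine Finset.sum_congr rfl fun k _ => ?_
        rw [hf _ (hre k), integral_const_mul]
    _ = ∫ t in Set.Ioi (0 : ℝ), ∑ k ∈ Finset.range (n + 1),
          (n.choose k : ℂ) * (-1) ^ (n - k) *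
            (Complex.exp (-(z + (k : ℂ) * (h : ℂ)) * t) * g t) := by
        exact (integral_finset_sum _ fun k _ => ((key k).const_mul _)).symm
    _ = ∫ t in Set.Ioi (0 : ℝ),
          Complex.exp (-z * t) * (Complex.exp (-(h : ℂ) * t) - 1) ^ n * g t := by
        refine integral_congr_ae (Filter.Eventually.of_forall fun t => ?_)
        have hexp : ∀ k : ℕ, Complex.exp (-(z + (k : ℂ) * (h : ℂ)) * t) =
            Complex.exp (-z * t) * Complex.exp (-(h : ℂ) * t) ^ k := by
          intro k
          rw [← Complex.exp_nat_mul, ← Complex.exp_add]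
          ring_nf
        simp only [hexp]
        rw [sub_eq_add_neg, add_pow, Finset.mul_sum, Finset.sum_mul]
        refine Finset.sum_congr rfl fun k _ => ?_
        ring
end
end

section
/- Let m : ℝ → ℂ be Lebesgue measurable, let j ∈ ℕ, let b₀,…,b_j ∈ ℂ, N₀,…,N_j ∈ ℕ, and c₀,…,c_j ∈ ℝ with each c_k ≥ 0. Let z ∈ ℂ be such that t ↦ e^{-z t} m(t) is Lebesgue integrable on (0,∞), and suppose f : ℂ → ℂ satisfies f(w) = ∫₀^∞ e^{-w t} m(t) dt + ∑_{k=0}^{j} b_k e^{-c_k w} w^{N_k} for every w ∈ ℂ with Re(w) ≥ Re(z). Then for every real h > 0, lim_{n→∞} Δ_h^n[f](z) = 0. -/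
open MeasureTheory Filter Finset Topology

noncomputable section

def Saux (x : ℝ) (i n : ℕ) : ℝ :=
  ∑ k ∈ Finset.range (n+1), (n.choose k : ℝ) * (-1)^(n-k) * x^k * (k:ℝ)^i

lemma Saux_zero (x : ℝ) (n : ℕ) : Saux x 0 n = (x - 1)^n := by
  unfold Saux
  have := add_pow x (-1) n
  rw [show x + (-1) = x - 1 by ring] at this
  rw [this]
  apply Finset.sum_congr rfl
  intro k _
  ring

lemma Saux_rec (x : ℝ) (i n : ℕ) :
    Saux x (i+1) (n+1) =
      ((n:ℝ)+1) * x * ∑ jj ∈ Finset.range (i+1), (i.choose jj : ℝ) * Saux x jj n := by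
  unfold Saux
  rw [Finset.sum_range_succ']
  have h0 : ((n+1).choose 0 : ℝ) * (-1)^(n+1-0) * x^0 * ((0:ℕ):ℝ)^(i+1) = 0 := by
    simp
  rw [h0, add_zero]
  have key : ∀ k ∈ Finset.range (n+1),
      ((n+1).choose (k+1) : ℝ) * (-1)^(n+1-(k+1)) * x^(k+1) * (((k+1:ℕ)):ℝ)^(i+1)
        = ∑ jj ∈ Finset.range (i+1), ((n:ℝ)+1) * x * ((i.choose jj : ℝ) *
            ((n.choose k : ℝ) * (-1)^(n-k) * x^k * (k:ℝ)^jj)) := by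
    intro k hk
    have h1 : ((n+1).choose (k+1) : ℝ) * ((k:ℝ)+1) = ((n:ℝ)+1) * (n.choose k : ℝ) := by
      exact_mod_cast congrArg (Nat.cast (R := ℝ)) (Nat.add_one_mul_choose_eq n k).symm
    have h2 : n+1-(k+1) = n-k := Nat.succ_sub_succ n k
    have h3 : ((k:ℝ)+1)^i = ∑ jj ∈ Finset.range (i+1), (k:ℝ)^jj * (i.choose jj : ℝ) := by
      have := add_pow (k:ℝ) 1 i
      simpa using this
    push_cast
    have l1 : ((n+1).choose (k+1) : ℝ) * (-1)^(n-k) * x^(k+1) * ((k:ℝ)+1)^(i+1)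
        = ((n:ℝ)+1) * (n.choose k:ℝ) * ((-1)^(n-k) * x^(k+1) * ((k:ℝ)+1)^i) := by
      linear_combination ((-1:ℝ)^(n-k) * x^(k+1) * ((k:ℝ)+1)^i) * h1
    rw [l1, h3]
    simp only [Finset.mul_sum]
    apply Finset.sum_congr rfl
    intro jj _
    ring
  rw [Finset.sum_congr rfl key, Finset.sum_comm]
  rw [Finset.mul_sum]
  apply Finset.sum_congr rfl
  intro jj _
  rw [Finset.mul_sum, Finset.mul_sum]

lemma Saux_bound (x : ℝ) (hx0 : 0 ≤ x) (hx1 : x ≤ 1) (i : ℕ) :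
    ∃ C : ℝ, 0 < C ∧ ∀ j ≤ i, ∀ n, j ≤ n →
      |Saux x j n| ≤ C * ((n:ℝ))^j * (1-x)^(n-j) := by
  have h1x0 : (0:ℝ) ≤ 1 - x := by linarith
  induction i with
  | zero =>
    refine ⟨1, one_pos, ?_⟩
    intro j hj n hn
    interval_cases j
    rw [Saux_zero, abs_pow, abs_sub_comm, abs_of_nonneg h1x0]
    simp
  | succ i ih =>
    obtain ⟨C, hC, hCb⟩ := ih
    refine ⟨2^i * C, by positivity, ?_⟩
    intro j hj n hn
    by_cases hji : j ≤ i
    · calc |Saux x j n| ≤ C * ((n:ℝ))^j * (1-x)^(n-j) := hCb j hji n hn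
        _ ≤ 2^i * C * ((n:ℝ))^j * (1-x)^(n-j) := by
            have h1 : (1:ℝ) ≤ 2^i := one_le_pow₀ (by norm_num)
            have h3 : C ≤ 2^i * C := le_mul_of_one_le_left hC.le h1
            exact mul_le_mul_of_nonneg_right
              (mul_le_mul_of_nonneg_right h3 (by positivity)) (pow_nonneg h1x0 _)
    · have hj' : j = i + 1 := by omega
      subst hj'
      obtain ⟨m, rfl⟩ : ∃ m, n = m + 1 := ⟨n - 1, by omega⟩
      have hm : i ≤ m := by omega
      rw [Saux_rec, abs_mul, abs_mul]
      have habs : |∑ jj ∈ Finset.range (i+1), (i.choose jj:ℝ) * Saux x jj m|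
          ≤ ∑ jj ∈ Finset.range (i+1), (i.choose jj:ℝ) * (C * ((m:ℝ)+1)^i * (1-x)^(m-i)) := by
        refine (Finset.abs_sum_le_sum_abs _ _).trans (Finset.sum_le_sum ?_)
        intro jj hjj
        have hjji : jj ≤ i := by simpa [Nat.lt_succ_iff] using hjj
        rw [abs_mul, Nat.abs_cast]
        refine mul_le_mul_of_nonneg_left ?_ (Nat.cast_nonneg _)
        refine (hCb jj hjji m (by omega)).trans ?_
        have e1 : ((m:ℝ))^jj ≤ ((m:ℝ)+1)^i := by
          calc ((m:ℝ))^jj ≤ ((m:ℝ)+1)^jj :=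
                pow_le_pow_left₀ (Nat.cast_nonneg m) (by linarith) jj
            _ ≤ ((m:ℝ)+1)^i := pow_le_pow_right₀ (by linarith [Nat.cast_nonneg (α := ℝ) m]) hjji
        have e2 : (1-x)^(m-jj) ≤ (1-x)^(m-i) :=
          pow_le_pow_of_le_one h1x0 (by linarith) (Nat.sub_le_sub_left hjji m)
        have h2 : (0:ℝ) ≤ (1-x)^(m-jj) := pow_nonneg h1x0 _
        have h3 : (0:ℝ) ≤ ((m:ℝ)+1)^i := by positivity
        calc C * ((m:ℝ))^jj * (1-x)^(m-jj) ≤ C * ((m:ℝ)+1)^i * (1-x)^(m-jj) :=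
              mul_le_mul_of_nonneg_right (mul_le_mul_of_nonneg_left e1 hC.le) h2
          _ ≤ C * ((m:ℝ)+1)^i * (1-x)^(m-i) := by
              rw [mul_assoc, mul_assoc]
              exact mul_le_mul_of_nonneg_left (mul_le_mul_of_nonneg_left e2 h3) hC.le
      have hsum : ∑ jj ∈ Finset.range (i+1), (i.choose jj:ℝ) * (C * ((m:ℝ)+1)^i * (1-x)^(m-i))
          = 2^i * (C * ((m:ℝ)+1)^i * (1-x)^(m-i)) := by
        rw [← Finset.sum_mul]
        congr 1
        exact_mod_cast congrArg (Nat.cast (R := ℝ)) (Nat.sum_range_choose i)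
      rw [hsum] at habs
      have hxabs : |x| ≤ 1 := abs_le.mpr ⟨by linarith, hx1⟩
      have hmm : |((m:ℝ)+1)| = (m:ℝ)+1 := abs_of_nonneg (by positivity)
      rw [hmm]
      have key : ((m:ℝ)+1) * |x| * |∑ jj ∈ Finset.range (i+1), (i.choose jj:ℝ) * Saux x jj m|
          ≤ ((m:ℝ)+1) * 1 * (2^i * (C * ((m:ℝ)+1)^i * (1-x)^(m-i))) := by
        have habs0 : (0:ℝ) ≤ |∑ jj ∈ Finset.range (i+1), (i.choose jj:ℝ) * Saux x jj m| :=
          abs_nonneg _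
        gcongr
      refine key.trans (le_of_eq ?_)
      have hsub : m + 1 - (i + 1) = m - i := by omega
      rw [hsub]
      push_cast
      ring

lemma Saux_tendsto (x : ℝ) (hx0 : 0 < x) (hx1 : x ≤ 1) (j : ℕ) :
    Tendsto (fun n => Saux x j n) atTop (nhds 0) := by
  obtain ⟨C, hC, hb⟩ := Saux_bound x hx0.le hx1 j
  set r : ℝ := max (1-x) (1/2) with hr
  have hr0 : 0 < r := lt_max_of_lt_right one_half_pos
  have hr1 : r < 1 := max_lt (by linarith) (by norm_num)
  have h1x : 1 - x ≤ r := le_max_left _ _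
  have h1x0 : 0 ≤ 1 - x := by linarith
  have hbnd : ∀ᶠ n in atTop, ‖Saux x j n‖ ≤ (C / r^j) * ((n:ℝ)^j * r^n) := by
    filter_upwards [eventually_ge_atTop j] with n hn
    rw [Real.norm_eq_abs]
    calc |Saux x j n| ≤ C * (n:ℝ)^j * (1-x)^(n-j) := hb j le_rfl n hn
      _ ≤ C * (n:ℝ)^j * r^(n-j) := by gcongr
      _ = C / r^j * ((n:ℝ)^j * r^n) := by
          rw [show r^n = r^(n-j) * r^j by rw [← pow_add, Nat.sub_add_cancel hn]]
          field_simp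
  refine squeeze_zero_norm' hbnd ?_
  have := (tendsto_pow_const_mul_const_pow_of_lt_one j hr0.le hr1).const_mul (C / r^j)
  simpa using this

lemma SauxC_tendsto (x : ℝ) (hx0 : 0 < x) (hx1 : x ≤ 1) (j : ℕ) :
    Tendsto (fun n => ∑ k ∈ Finset.range (n+1),
      (n.choose k : ℂ) * (-1)^(n-k) * (x:ℂ)^k * (k:ℂ)^j) atTop (nhds 0) := by
  have e : ∀ n, (∑ k ∈ Finset.range (n+1),
      (n.choose k : ℂ) * (-1)^(n-k) * (x:ℂ)^k * (k:ℂ)^j) = ((Saux x j n : ℝ) : ℂ) := by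
    intro n
    rw [Saux]
    push_cast
    rfl
  simp_rw [e]
  have := (Complex.continuous_ofReal.tendsto 0).comp (Saux_tendsto x hx0 hx1 j)
  simpa [Function.comp_def] using this

lemma partB (z : ℂ) (h : ℝ) (hh : 0 < h) (c : ℝ) (hc : 0 ≤ c) (N : ℕ) (b : ℂ) :
    Tendsto (fun n : ℕ => ∑ k ∈ Finset.range (n+1), (n.choose k : ℂ) * (-1)^(n-k) *
      (b * Complex.exp (-(c:ℂ) * (z + (k:ℂ)*(h:ℂ))) * (z + (k:ℂ)*(h:ℂ))^N)) atTop (nhds 0) := by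
  set x : ℝ := Real.exp (-(c*h)) with hxdef
  have hx0 : 0 < x := Real.exp_pos _
  have hx1 : x ≤ 1 := Real.exp_le_one_iff.mpr (by nlinarith)
  have hterm : ∀ n k : ℕ,
      (n.choose k : ℂ) * (-1)^(n-k) *
        (b * Complex.exp (-(c:ℂ) * (z + (k:ℂ)*(h:ℂ))) * (z + (k:ℂ)*(h:ℂ))^N)
      = ∑ i ∈ Finset.range (N+1),
          (b * Complex.exp (-(c:ℂ)*z) * z^i * (h:ℂ)^(N-i) * (N.choose i : ℂ)) *
            ((n.choose k : ℂ) * (-1)^(n-k) * (x:ℂ)^k * (k:ℂ)^(N-i)) := by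
    intro n k
    have e1 : Complex.exp (-(c:ℂ) * (z + (k:ℂ)*(h:ℂ)))
        = Complex.exp (-(c:ℂ)*z) * (x:ℂ)^k := by
      rw [show -(c:ℂ) * (z + (k:ℂ)*(h:ℂ)) = -(c:ℂ)*z + (k:ℂ) * ((-(c*h):ℝ):ℂ) by
          push_cast; ring,
        Complex.exp_add, Complex.exp_nat_mul, ← Complex.ofReal_exp, hxdef]
    rw [e1, add_pow, Finset.mul_sum, Finset.mul_sum]
    apply Finset.sum_congr rfl
    intro i _
    rw [mul_pow]
    ring
  simp_rw [hterm]
  have swap : ∀ n, (∑ k ∈ Finset.range (n+1), ∑ i ∈ Finset.range (N+1),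
      (b * Complex.exp (-(c:ℂ)*z) * z^i * (h:ℂ)^(N-i) * (N.choose i : ℂ)) *
        ((n.choose k : ℂ) * (-1)^(n-k) * (x:ℂ)^k * (k:ℂ)^(N-i)))
      = ∑ i ∈ Finset.range (N+1),
          (b * Complex.exp (-(c:ℂ)*z) * z^i * (h:ℂ)^(N-i) * (N.choose i : ℂ)) *
          ∑ k ∈ Finset.range (n+1), ((n.choose k : ℂ) * (-1)^(n-k) * (x:ℂ)^k * (k:ℂ)^(N-i)) := by
    intro n
    rw [Finset.sum_comm]
    exact Finset.sum_congr rfl fun i _ => (Finset.mul_sum _ _ _).symm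
  simp_rw [swap]
  rw [show (0:ℂ) = ∑ i ∈ Finset.range (N+1),
      (b * Complex.exp (-(c:ℂ)*z) * z^i * (h:ℂ)^(N-i) * (N.choose i : ℂ)) * 0 by simp]
  apply tendsto_finset_sum
  intro i _
  exact (SauxC_tendsto x hx0 hx1 (N-i)).const_mul _

lemma partA (m : ℝ → ℂ) (hm : Measurable m) (z : ℂ)
    (hint : IntegrableOn (fun t : ℝ => Complex.exp (-z * t) * m t) (Set.Ioi 0))
    (h : ℝ) (hh : 0 < h) :
    Tendsto (fun n : ℕ => ∑ k ∈ Finset.range (n+1), (n.choose k : ℂ) * (-1)^(n-k) *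
      ∫ t in Set.Ioi (0:ℝ), Complex.exp (-(z + (k:ℂ)*(h:ℂ)) * t) * m t) atTop (nhds 0) := by
  -- rewrite exponential
  have e2 : ∀ (k : ℕ) (t : ℝ), Complex.exp (-(z + (k:ℂ)*(h:ℂ)) * t)
      = ((Real.exp (-(h*t)) : ℝ):ℂ)^k * Complex.exp (-z*t) := by
    intro k t
    rw [show -(z + (k:ℂ)*(h:ℂ)) * t = (k:ℂ) * ((-(h*t):ℝ):ℂ) + (-z*t) by push_cast; ring,
      Complex.exp_add, Complex.exp_nat_mul, ← Complex.ofReal_exp]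
  -- integrability of each term
  have meas : ∀ k : ℕ, AEStronglyMeasurable
      (fun t : ℝ => ((Real.exp (-(h*t)) : ℝ):ℂ)^k * Complex.exp (-z*t) * m t)
      (volume.restrict (Set.Ioi 0)) := by
    intro k
    apply Measurable.aestronglyMeasurable
    fun_prop
  have bnd : ∀ (k : ℕ), ∀ t ∈ Set.Ioi (0:ℝ),
      ‖((Real.exp (-(h*t)) : ℝ):ℂ)^k * Complex.exp (-z*t) * m t‖
        ≤ ‖Complex.exp (-z*t) * m t‖ := by
    intro k t ht
    rw [mul_assoc, norm_mul]
    have h1 : ‖((Real.exp (-(h*t)) : ℝ):ℂ)^k‖ ≤ 1 := by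
      rw [norm_pow, Complex.norm_real, Real.norm_eq_abs,
        abs_of_nonneg (Real.exp_nonneg _)]
      exact pow_le_one₀ (Real.exp_nonneg _) (Real.exp_le_one_iff.mpr (by nlinarith [ht.out]))
    calc ‖((Real.exp (-(h*t)) : ℝ):ℂ)^k‖ * ‖Complex.exp (-z*t) * m t‖
        ≤ 1 * ‖Complex.exp (-z*t) * m t‖ :=
          mul_le_mul_of_nonneg_right h1 (norm_nonneg _)
      _ = _ := one_mul _
  have integ : ∀ k : ℕ, IntegrableOn
      (fun t : ℝ => ((Real.exp (-(h*t)) : ℝ):ℂ)^k * Complex.exp (-z*t) * m t) (Set.Ioi 0) := by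
    intro k
    refine Integrable.mono hint (meas k) ?_
    rw [ae_restrict_iff' measurableSet_Ioi]
    exact Filter.Eventually.of_forall (bnd k)
  -- swap sum and integral
  have swap : ∀ n : ℕ, (∑ k ∈ Finset.range (n+1), (n.choose k : ℂ) * (-1)^(n-k) *
      ∫ t in Set.Ioi (0:ℝ), Complex.exp (-(z + (k:ℂ)*(h:ℂ)) * t) * m t)
      = ∫ t in Set.Ioi (0:ℝ),
          (((Real.exp (-(h*t)) : ℝ):ℂ) - 1)^n * (Complex.exp (-z*t) * m t) := by
    intro n
    have : ∀ k ∈ Finset.range (n+1), (n.choose k : ℂ) * (-1)^(n-k) *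
        ∫ t in Set.Ioi (0:ℝ), Complex.exp (-(z + (k:ℂ)*(h:ℂ)) * t) * m t
        = ∫ t in Set.Ioi (0:ℝ), (n.choose k : ℂ) * (-1)^(n-k) *
            (((Real.exp (-(h*t)) : ℝ):ℂ)^k * Complex.exp (-z*t) * m t) := by
      intro k _
      rw [← MeasureTheory.integral_const_mul]
      apply integral_congr_ae
      filter_upwards with t
      rw [e2 k t, mul_assoc]
    rw [Finset.sum_congr rfl this, ← integral_finset_sum]
    · apply integral_congr_ae
      filter_upwards with t
      have hb := add_pow (((Real.exp (-(h*t)) : ℝ):ℂ)) (-1) n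
      rw [show (((Real.exp (-(h*t)) : ℝ):ℂ) - 1) = ((Real.exp (-(h*t)) : ℝ):ℂ) + (-1) by ring,
        hb, Finset.sum_mul]
      apply Finset.sum_congr rfl
      intro k _
      ring
    · intro k _
      exact ((integ k).const_mul _)
  simp_rw [swap]
  -- dominated convergence
  have := tendsto_integral_of_dominated_convergence
    (μ := volume.restrict (Set.Ioi (0:ℝ)))
    (F := fun (n : ℕ) (t : ℝ) =>
      (((Real.exp (-(h*t)) : ℝ):ℂ) - 1)^n * (Complex.exp (-z*t) * m t))
    (f := fun _ => (0:ℂ))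
    (fun t => ‖Complex.exp (-z*t) * m t‖)
    (fun n => by apply Measurable.aestronglyMeasurable; fun_prop)
    hint.norm
    (fun n => by
      rw [ae_restrict_iff' measurableSet_Ioi]
      filter_upwards with t ht
      have hx0 : 0 < Real.exp (-(h*t)) := Real.exp_pos _
      have hx1 : Real.exp (-(h*t)) ≤ 1 := Real.exp_le_one_iff.mpr (by nlinarith [ht.out])
      rw [norm_mul, norm_pow]
      have : ‖(((Real.exp (-(h*t)) : ℝ):ℂ) - 1)‖ ≤ 1 := by
        rw [show (((Real.exp (-(h*t)) : ℝ):ℂ) - 1) = ((Real.exp (-(h*t)) - 1 : ℝ):ℂ) by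
            push_cast; ring, Complex.norm_real, Real.norm_eq_abs, abs_le]
        constructor <;> nlinarith
      calc ‖(((Real.exp (-(h*t)) : ℝ):ℂ) - 1)‖^n * ‖Complex.exp (-z*t) * m t‖
          ≤ 1^n * ‖Complex.exp (-z*t) * m t‖ := by
            exact mul_le_mul_of_nonneg_right (pow_le_pow_left₀ (norm_nonneg _) this n)
              (norm_nonneg _)
        _ = _ := by rw [one_pow, one_mul])
    (by
      rw [ae_restrict_iff' measurableSet_Ioi]
      filter_upwards with t ht
      have hx0 : 0 < Real.exp (-(h*t)) := Real.exp_pos _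
      have hx1 : Real.exp (-(h*t)) < 1 := by
        rw [Real.exp_lt_one_iff]
        nlinarith [ht.out]
      have hnorm : ‖(((Real.exp (-(h*t)) : ℝ):ℂ) - 1)‖ < 1 := by
        rw [show (((Real.exp (-(h*t)) : ℝ):ℂ) - 1) = ((Real.exp (-(h*t)) - 1 : ℝ):ℂ) by
            push_cast; ring, Complex.norm_real, Real.norm_eq_abs, abs_lt]
        constructor <;> nlinarith
      have := (tendsto_pow_atTop_nhds_zero_of_norm_lt_one hnorm).mul_const
        (Complex.exp (-z*t) * m t)
      simpa using this)
  simpa using this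

theorem forward_differences_tendsto_zero
    (m : ℝ → ℂ) (hm : Measurable m) (j : ℕ) (b : ℕ → ℂ) (N : ℕ → ℕ)
    (c : ℕ → ℝ) (hc : ∀ k ≤ j, 0 ≤ c k) (z : ℂ)
    (hint : IntegrableOn (fun t : ℝ => Complex.exp (-z * t) * m t) (Set.Ioi 0))
    (f : ℂ → ℂ)
    (hf : ∀ w : ℂ, z.re ≤ w.re →
      f w = (∫ t in Set.Ioi (0 : ℝ), Complex.exp (-w * t) * m t)
        + ∑ k ∈ Finset.range (j + 1), b k * Complex.exp (-(c k : ℂ) * w) * w ^ (N k))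
    (h : ℝ) (hh : 0 < h) :
    Tendsto (fun n : ℕ =>
        ∑ k ∈ Finset.range (n + 1),
          (n.choose k : ℂ) * (-1) ^ (n - k) * f (z + (k : ℂ) * (h : ℂ)))
      atTop (nhds 0) := by
  have hre : ∀ k : ℕ, z.re ≤ (z + (k:ℂ)*(h:ℂ)).re := by
    intro k
    rw [show ((k:ℂ)*(h:ℂ)) = ((k*h : ℝ):ℂ) by push_cast; ring,
      Complex.add_re, Complex.ofReal_re]
    nlinarith [Nat.cast_nonneg (α := ℝ) k, hh.le]
  have key : ∀ n : ℕ, (∑ k ∈ Finset.range (n+1),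
        (n.choose k : ℂ) * (-1)^(n-k) * f (z + (k:ℂ)*(h:ℂ)))
      = (∑ k ∈ Finset.range (n+1), (n.choose k : ℂ) * (-1)^(n-k) *
          ∫ t in Set.Ioi (0:ℝ), Complex.exp (-(z + (k:ℂ)*(h:ℂ)) * t) * m t)
        + ∑ l ∈ Finset.range (j+1), ∑ k ∈ Finset.range (n+1),
            (n.choose k : ℂ) * (-1)^(n-k) *
              (b l * Complex.exp (-(c l : ℂ) * (z + (k:ℂ)*(h:ℂ))) * (z + (k:ℂ)*(h:ℂ))^(N l)) := by
    intro n
    have e : ∀ k ∈ Finset.range (n+1),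
        (n.choose k : ℂ) * (-1)^(n-k) * f (z + (k:ℂ)*(h:ℂ))
        = (n.choose k : ℂ) * (-1)^(n-k) *
            (∫ t in Set.Ioi (0:ℝ), Complex.exp (-(z + (k:ℂ)*(h:ℂ)) * t) * m t)
          + ∑ l ∈ Finset.range (j+1), (n.choose k : ℂ) * (-1)^(n-k) *
              (b l * Complex.exp (-(c l : ℂ) * (z + (k:ℂ)*(h:ℂ))) * (z + (k:ℂ)*(h:ℂ))^(N l)) := by
      intro k _
      rw [hf _ (hre k), mul_add, Finset.mul_sum]
    rw [Finset.sum_congr rfl e, Finset.sum_add_distrib]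
    congr 1
    exact Finset.sum_comm
  simp_rw [key]
  have hA := partA m hm z hint h hh
  have hB : Tendsto (fun n : ℕ => ∑ l ∈ Finset.range (j+1), ∑ k ∈ Finset.range (n+1),
      (n.choose k : ℂ) * (-1)^(n-k) *
        (b l * Complex.exp (-(c l : ℂ) * (z + (k:ℂ)*(h:ℂ))) * (z + (k:ℂ)*(h:ℂ))^(N l)))
      atTop (nhds 0) := by
    rw [show (0:ℂ) = ∑ _l ∈ Finset.range (j+1), (0:ℂ) by simp]
    apply tendsto_finset_sum
    intro l hl
    exact partB z h hh (c l) (hc l (Nat.lt_succ_iff.mp (Finset.mem_range.mp hl))) (N l) (b l)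
  have := hA.add hB
  simpa using this
end
end

section
/- Let m : ℝ → ℂ be Lebesgue measurable, let j ∈ ℕ, let b₀,…,b_j ∈ ℂ, N₀,…,N_j ∈ ℕ, and c₀,…,c_j ∈ ℝ with each c_k ≥ 0. Let z ∈ ℂ be such that t ↦ e^{z t} m(t) is Lebesgue integrable on (0,∞), and suppose g : ℂ → ℂ satisfies g(w) = ∫₀^∞ e^{-w t} m(t) dt + ∑_{k=0}^{j} b_k e^{-c_k w} w^{N_k} for every w ∈ ℂ with Re(w) ≥ −Re(z). Define f : ℂ → ℂ by f(t) = g(−t). Then for every real h > 0, lim_{n→∞} ∇_h^n[f](z) = 0. -/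
open MeasureTheory Filter Finset Topology

noncomputable section


noncomputable def Tfun (q : ℂ) (r n : ℕ) : ℂ :=
  ∑ k ∈ Finset.range (n+1), (n.choose k : ℂ) * (-1)^k * q^k * (k:ℂ)^r

lemma Tfun_zero (q : ℂ) (n : ℕ) : Tfun q 0 n = (1 - q)^n := by
  have h := add_pow (-q) 1 n
  simp only [one_pow, mul_one] at h
  unfold Tfun
  rw [show (1 : ℂ) - q = -q + 1 by ring, h]
  apply Finset.sum_congr rfl
  intro k _
  rw [neg_pow]
  push_cast
  ring

lemma Tfun_rec (q : ℂ) (r n : ℕ) :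
    Tfun q (r+1) (n+1) = (-q) * (n+1) * ∑ s ∈ Finset.range (r+1), (r.choose s : ℂ) * Tfun q s n := by
  unfold Tfun
  rw [Finset.sum_range_succ']
  simp only [Nat.cast_zero, zero_pow (Nat.succ_ne_zero r), mul_zero, add_zero]
  simp only [Finset.mul_sum]
  rw [Finset.sum_comm]
  apply Finset.sum_congr rfl
  intro i _
  push_cast
  have hch : ((n+1).choose (i+1) * (i+1) : ℂ) = ((n+1) * n.choose i : ℂ) := by
    norm_cast
    rw [← Nat.add_one_mul_choose_eq]
  have hbin : ((i:ℂ)+1)^r = ∑ s ∈ Finset.range (r+1), (i:ℂ)^s * (r.choose s : ℂ) := by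
    have := add_pow (i:ℂ) 1 r
    simp only [one_pow, mul_one] at this
    exact this
  calc ((n+1).choose (i+1) : ℂ) * (-1)^(i+1) * q^(i+1) * ((i:ℂ)+1)^(r+1)
      = (((n+1).choose (i+1) * (i+1) : ℂ)) * (-1)^(i+1) * q^(i+1) * ((i:ℂ)+1)^r := by
        push_cast
        ring
    _ = ((n+1) * n.choose i : ℂ) * (-1)^(i+1) * q^(i+1) * ∑ s ∈ Finset.range (r+1), (i:ℂ)^s * (r.choose s : ℂ) := by
        rw [hch, hbin]
    _ = ∑ s ∈ Finset.range (r+1), -q * (↑n + 1) * ((r.choose s : ℂ) * ((n.choose i : ℂ) * (-1)^i * q^i * (i:ℂ)^s)) := by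
        rw [Finset.mul_sum]
        apply Finset.sum_congr rfl
        intro s _
        push_cast
        ring

lemma aux_shift {T : ℕ → ℂ} (hT : ∀ d : ℕ, Tendsto (fun n : ℕ => (n:ℂ)^d * T n) atTop (𝓝 0))
    (a : ℂ) (d : ℕ) : Tendsto (fun n : ℕ => ((n:ℂ)+a)^d * T n) atTop (𝓝 0) := by
  have key : ∀ n : ℕ, ((n:ℂ)+a)^d * T n
      = ∑ i ∈ Finset.range (d+1), (a^(d-i) * (d.choose i)) * ((n:ℂ)^i * T n) := by
    intro n
    rw [add_pow, Finset.sum_mul]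
    exact Finset.sum_congr rfl fun i _ => by ring
  simp only [key]
  have : Tendsto (fun n : ℕ => ∑ i ∈ Finset.range (d+1), (a^(d-i) * (d.choose i)) * ((n:ℂ)^i * T n))
      atTop (𝓝 (∑ i ∈ Finset.range (d+1), 0)) :=
    tendsto_finset_sum _ fun i _ => by simpa using (hT i).const_mul (a^(d-i) * (d.choose i))
  simpa using this

lemma Tfun_tendsto (q : ℝ) (hq0 : 0 < q) (hq1 : q ≤ 1) (r : ℕ) :
    ∀ d : ℕ, Tendsto (fun n : ℕ => (n:ℂ)^d * Tfun q r n) atTop (𝓝 0) := by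
  induction r using Nat.strong_induction_on with
  | _ r IH =>
    match r with
    | 0 =>
      intro d
      simp only [Tfun_zero]
      have hlt : ‖(1:ℂ) - (q:ℂ)‖ < 1 := by
        rw [show (1:ℂ) - (q:ℂ) = ((1 - q : ℝ) : ℂ) by push_cast; ring, Complex.norm_real,
          Real.norm_eq_abs, abs_of_nonneg (by linarith)]
        linarith
      exact ((summable_norm_pow_mul_geometric_of_norm_lt_one d hlt).of_norm).tendsto_atTop_zero
    | (r+1) =>
      intro d
      rw [← tendsto_add_atTop_iff_nat 1]
      have key : ∀ n : ℕ, (((n+1:ℕ)):ℂ)^d * Tfun q (r+1) (n+1)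
          = ∑ s ∈ Finset.range (r+1), ((-(q:ℂ)) * (r.choose s)) * (((n:ℂ)+1)^(d+1) * Tfun q s n) := by
        intro n
        rw [Tfun_rec]
        push_cast
        simp only [Finset.mul_sum]
        exact Finset.sum_congr rfl fun s _ => by ring
      simp only [key]
      have : Tendsto (fun n : ℕ => ∑ s ∈ Finset.range (r+1),
            ((-(q:ℂ)) * (r.choose s)) * (((n:ℂ)+1)^(d+1) * Tfun q s n))
          atTop (𝓝 (∑ s ∈ Finset.range (r+1), 0)) :=
        tendsto_finset_sum _ fun s hs => by
          simpa using (aux_shift (fun d' => IH s (Finset.mem_range.mp hs) d') 1 (d+1)).const_mul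
            ((-(q:ℂ)) * (r.choose s))
      simpa using this

lemma intpart (m : ℝ → ℂ) (z : ℂ)
    (hint : IntegrableOn (fun t : ℝ => Complex.exp (z * t) * m t) (Set.Ioi 0))
    (h : ℝ) (hh : 0 < h) :
    Tendsto (fun n : ℕ => ∫ t in Set.Ioi (0:ℝ),
        Complex.exp (z*t) * m t * (1 - Complex.exp (-(h:ℂ)*t))^n) atTop (𝓝 0) := by
  have hcont : ∀ n : ℕ, Continuous (fun t : ℝ => (1 - Complex.exp (-(h:ℂ)*t))^n) := fun n =>
    (continuous_const.sub (Complex.continuous_exp.comp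
      (continuous_const.mul Complex.continuous_ofReal))).pow n
  have key : ∀ t : ℝ, 0 < t → ‖(1 - Complex.exp (-(h:ℂ)*t))‖ < 1 := by
    intro t ht
    have h0 : -(h:ℂ)*t = ((-(h*t) : ℝ) : ℂ) := by push_cast; ring
    rw [h0, ← Complex.ofReal_exp, ← Complex.ofReal_one, ← Complex.ofReal_sub,
      Complex.norm_real, Real.norm_eq_abs,
      abs_of_nonneg (by linarith [Real.exp_le_one_iff.mpr (by nlinarith : -(h*t) ≤ 0)])]
    linarith [Real.exp_pos (-(h*t))]
  rw [show (0:ℂ) = ∫ (_ : ℝ) in Set.Ioi (0:ℝ), (0:ℂ) by simp]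
  apply tendsto_integral_of_dominated_convergence (fun t : ℝ => ‖Complex.exp (z*t) * m t‖)
  · exact fun n => hint.aestronglyMeasurable.mul ((hcont n).aestronglyMeasurable)
  · exact hint.norm
  · intro n
    filter_upwards [ae_restrict_mem measurableSet_Ioi] with t ht
    rw [norm_mul, norm_pow]
    exact mul_le_of_le_one_right (norm_nonneg _)
      (pow_le_one₀ (norm_nonneg _) (key t ht).le)
  · filter_upwards [ae_restrict_mem measurableSet_Ioi] with t ht
    simpa using (tendsto_pow_atTop_nhds_zero_of_norm_lt_one (key t ht)).const_mul
      (Complex.exp (z*t) * m t)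

theorem backward_differences_tendsto_zero
    (m : ℝ → ℂ) (hm : Measurable m) (j : ℕ) (b : ℕ → ℂ) (N : ℕ → ℕ)
    (c : ℕ → ℝ) (hc : ∀ k ≤ j, 0 ≤ c k) (z : ℂ)
    (hint : IntegrableOn (fun t : ℝ => Complex.exp (z * t) * m t) (Set.Ioi 0))
    (g : ℂ → ℂ)
    (hg : ∀ w : ℂ, (-z).re ≤ w.re →
      g w = (∫ t in Set.Ioi (0 : ℝ), Complex.exp (-w * t) * m t)
        + ∑ k ∈ Finset.range (j + 1), b k * Complex.exp (-(c k : ℂ) * w) * w ^ (N k))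
    (f : ℂ → ℂ) (hfg : ∀ t : ℂ, f t = g (-t))
    (h : ℝ) (hh : 0 < h) :
    Tendsto (fun n : ℕ =>
        ∑ k ∈ Finset.range (n + 1),
          (n.choose k : ℂ) * (-1) ^ k * f (z - (k : ℂ) * (h : ℂ)))
      atTop (nhds 0) := by
  set q : ℕ → ℝ := fun k' => Real.exp (-(c k' * h)) with hqdef
  set C : ℕ → ℕ → ℂ := fun k' r => b k' * Complex.exp ((c k' : ℂ) * z)
      * (((N k').choose r : ℕ) : ℂ) * (h:ℂ)^r * (-z)^(N k' - r) with hCdef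
  have hGint : ∀ k : ℕ,
      IntegrableOn (fun t : ℝ => Complex.exp ((z - (k:ℂ)*(h:ℂ)) * t) * m t) (Set.Ioi 0) := by
    intro k
    apply MeasureTheory.Integrable.mono hint
    · apply AEStronglyMeasurable.mul _ (hm.aestronglyMeasurable.restrict)
      exact (Complex.continuous_exp.comp
        (continuous_const.mul Complex.continuous_ofReal)).aestronglyMeasurable
    · filter_upwards [ae_restrict_mem measurableSet_Ioi] with t ht
      simp only [norm_mul, Complex.norm_exp]
      apply mul_le_mul_of_nonneg_right _ (norm_nonneg _)
      apply Real.exp_le_exp.mpr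
      have h1 : ((z - (k:ℂ)*(h:ℂ)) * (t:ℂ)).re = (z.re - k*h) * t := by
        simp [Complex.sub_re, Complex.mul_re, Complex.ofReal_re, Complex.ofReal_im]
      have h2 : ((z : ℂ) * (t:ℂ)).re = z.re * t := by
        simp [Complex.mul_re, Complex.ofReal_re, Complex.ofReal_im]
      rw [h1, h2]
      have h3 : (0:ℝ) ≤ (k:ℝ)*h*t := by
        have := Set.mem_Ioi.mp ht
        positivity
      nlinarith
  have main : ∀ n : ℕ,
      (∑ k ∈ Finset.range (n + 1), (n.choose k : ℂ) * (-1) ^ k * f (z - (k : ℂ) * (h : ℂ)))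
      = (∫ t in Set.Ioi (0:ℝ), Complex.exp (z*t) * m t * (1 - Complex.exp (-(h:ℂ)*t))^n)
        + ∑ k' ∈ Finset.range (j+1), ∑ r ∈ Finset.range (N k' + 1),
            C k' r * Tfun ((q k' : ℝ) : ℂ) r n := by
    intro n
    have hstep : ∀ k ∈ Finset.range (n+1),
        (n.choose k : ℂ) * (-1)^k * f (z - (k:ℂ)*(h:ℂ))
        = (n.choose k : ℂ) * (-1)^k
            * (∫ t in Set.Ioi (0:ℝ), Complex.exp ((z - (k:ℂ)*(h:ℂ)) * t) * m t)
          + ∑ k' ∈ Finset.range (j+1), ∑ r ∈ Finset.range (N k' + 1),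
              C k' r * ((n.choose k : ℂ) * (-1)^k * ((q k' : ℝ):ℂ)^k * (k:ℂ)^r) := by
      intro k _
      have hre : (-z).re ≤ (-(z - (k:ℂ)*(h:ℂ))).re := by
        simp only [Complex.neg_re, Complex.sub_re, Complex.mul_re, Complex.ofReal_re,
          Complex.ofReal_im, Complex.natCast_re, Complex.natCast_im, mul_zero, zero_mul,
          sub_zero]
        have : (0:ℝ) ≤ (k:ℝ)*h := by positivity
        linarith
      rw [hfg, hg _ hre]
      simp only [neg_neg]
      rw [mul_add]
      congr 1
      rw [Finset.mul_sum]
      apply Finset.sum_congr rfl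
      intro k' hk'
      have hw : -(z - (k:ℂ)*(h:ℂ)) = (k:ℂ)*(h:ℂ) - z := by ring
      rw [hw]
      have hqk : ((q k' : ℝ):ℂ) = Complex.exp ((-(c k' * h) : ℝ) : ℂ) := by
        rw [hqdef, Complex.ofReal_exp]
      have hexp : Complex.exp (-((c k':ℝ):ℂ) * ((k:ℂ)*(h:ℂ) - z))
          = Complex.exp (((c k':ℝ):ℂ)*z) * ((q k' : ℝ):ℂ)^k := by
        rw [hqk, ← Complex.exp_nat_mul, ← Complex.exp_add]
        congr 1
        push_cast
        ring
      have hpow : ((k:ℂ)*(h:ℂ) - z)^(N k')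
          = ∑ r ∈ Finset.range (N k' + 1),
              ((k:ℂ)*(h:ℂ))^r * (-z)^(N k' - r) * (((N k').choose r : ℕ) : ℂ) := by
        rw [sub_eq_add_neg, add_pow]
      rw [hexp, hpow, hCdef]
      simp only [Finset.mul_sum]
      apply Finset.sum_congr rfl
      intro r _
      ring
    rw [Finset.sum_congr rfl hstep, Finset.sum_add_distrib]
    congr 1
    · have heq : ∀ t : ℝ,
          (∑ k ∈ Finset.range (n+1), (n.choose k : ℂ) * (-1)^k
            * (Complex.exp ((z - (k:ℂ)*(h:ℂ)) * t) * m t))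
          = Complex.exp (z*t) * m t * (1 - Complex.exp (-(h:ℂ)*t))^n := by
        intro t
        have hb : ((1:ℂ) - Complex.exp (-(h:ℂ)*t))^n
            = ∑ k ∈ Finset.range (n+1),
                (n.choose k : ℂ) * (-1)^k * (Complex.exp (-(h:ℂ)*t))^k := by
          have hap := add_pow (-(Complex.exp (-(h:ℂ)*t))) 1 n
          simp only [one_pow, mul_one] at hap
          rw [show (1:ℂ) - Complex.exp (-(h:ℂ)*t) = -(Complex.exp (-(h:ℂ)*t)) + 1 by ring,
            hap]
          apply Finset.sum_congr rfl
          intro k _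
          rw [neg_pow]
          ring
        rw [hb, Finset.mul_sum]
        apply Finset.sum_congr rfl
        intro k _
        have hef : Complex.exp ((z - (k:ℂ)*(h:ℂ)) * t)
            = Complex.exp (z*t) * (Complex.exp (-(h:ℂ)*t))^k := by
          rw [← Complex.exp_nat_mul, ← Complex.exp_add]
          congr 1
          ring
        rw [hef]
        ring
      calc ∑ k ∈ Finset.range (n+1), (n.choose k : ℂ) * (-1)^k
            * (∫ t in Set.Ioi (0:ℝ), Complex.exp ((z - (k:ℂ)*(h:ℂ)) * t) * m t)
          = ∑ k ∈ Finset.range (n+1), ∫ t in Set.Ioi (0:ℝ),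
              (n.choose k : ℂ) * (-1)^k * (Complex.exp ((z - (k:ℂ)*(h:ℂ)) * t) * m t) := by
            apply Finset.sum_congr rfl
            intro k _
            rw [MeasureTheory.integral_const_mul]
        _ = ∫ t in Set.Ioi (0:ℝ), ∑ k ∈ Finset.range (n+1),
              (n.choose k : ℂ) * (-1)^k * (Complex.exp ((z - (k:ℂ)*(h:ℂ)) * t) * m t) := by
            exact (MeasureTheory.integral_finset_sum _
              (fun k _ => ((hGint k).const_mul _))).symm
        _ = ∫ t in Set.Ioi (0:ℝ), Complex.exp (z*t) * m t * (1 - Complex.exp (-(h:ℂ)*t))^n := by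
            exact MeasureTheory.integral_congr_ae (Filter.Eventually.of_forall heq)
    · rw [Finset.sum_comm]
      apply Finset.sum_congr rfl
      intro k' _
      rw [Finset.sum_comm]
      apply Finset.sum_congr rfl
      intro r _
      rw [Tfun, Finset.mul_sum]
  have hI := intpart m z hint h hh
  have hD : Tendsto (fun n : ℕ => ∑ k' ∈ Finset.range (j+1), ∑ r ∈ Finset.range (N k' + 1),
      C k' r * Tfun ((q k' : ℝ):ℂ) r n) atTop (𝓝 0) := by
    have : Tendsto (fun n : ℕ => ∑ k' ∈ Finset.range (j+1), ∑ r ∈ Finset.range (N k' + 1),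
        C k' r * Tfun ((q k' : ℝ):ℂ) r n) atTop
        (𝓝 (∑ k' ∈ Finset.range (j+1), ∑ r ∈ Finset.range (N k' + 1), 0)) := by
      apply tendsto_finset_sum
      intro k' hk'
      apply tendsto_finset_sum
      intro r _
      have hq0 : 0 < q k' := Real.exp_pos _
      have hq1 : q k' ≤ 1 := by
        rw [hqdef]
        apply Real.exp_le_one_iff.mpr
        have := hc k' (Nat.lt_succ_iff.mp (Finset.mem_range.mp hk'))
        nlinarith
      have := Tfun_tendsto (q k') hq0 hq1 r 0
      simp only [pow_zero, one_mul] at this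
      simpa using this.const_mul (C k' r)
    simpa using this
  have := hI.add hD
  rw [add_zero] at this
  exact this.congr fun n => (main n).symm
end
end

section
/- Let P, Q be polynomials with real coefficients, Q ≠ 0, and regard them as complex polynomials. Let z₀ ∈ ℂ satisfy Re(z₀) > 0 and Re(z₀) > Re(σ) for every complex root σ of Q. Define R : ℂ → ℂ by R(w) = P(w)/Q(w). Then for every z ∈ ℂ with Re(z) > Re(z₀), the Newton series ∑_{k=0}^{∞} C(z − z₀, k) · Δ^k[R](z₀) converges and its sum equals R(z). -/
open MeasureTheory Filter Finset Topology

noncomputable section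

/-- The generalized binomial coefficient `C(w, k) = w (w-1) ⋯ (w-k+1) / k!`. -/
def genBinom (w : ℂ) (k : ℕ) : ℂ :=
  (∏ i ∈ Finset.range k, (w - (i : ℂ))) / (k.factorial : ℂ)

/-- The k-th forward difference (step 1) of `f` at `z₀`. -/
def fwdDiff1 (f : ℂ → ℂ) (z₀ : ℂ) (k : ℕ) : ℂ :=
  ∑ i ∈ Finset.range (k + 1), (k.choose i : ℂ) * (-1) ^ (k - i) * f (z₀ + (i : ℂ))

lemma fwdDiff1_eq_iter (f : ℂ → ℂ) (z₀ : ℂ) (k : ℕ) :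
    fwdDiff1 f z₀ k = (fwdDiff (1:ℂ))^[k] f z₀ := by
  rw [fwdDiff_iter_eq_sum_shift, fwdDiff1]
  refine Finset.sum_congr rfl fun i hi => ?_
  simp only [nsmul_eq_mul, mul_one, zsmul_eq_mul]
  push_cast
  ring

lemma fwdDiff1_congr {f g : ℂ → ℂ} (z₀ : ℂ) (k : ℕ)
    (h : ∀ i : ℕ, i ≤ k → f (z₀ + i) = g (z₀ + i)) :
    fwdDiff1 f z₀ k = fwdDiff1 g z₀ k := by
  unfold fwdDiff1
  refine Finset.sum_congr rfl fun i hi => ?_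
  rw [h i (by simpa [Nat.lt_succ_iff] using hi)]

lemma fwdDiff1_add (f g : ℂ → ℂ) (z₀ : ℂ) (k : ℕ) :
    fwdDiff1 (fun w => f w + g w) z₀ k = fwdDiff1 f z₀ k + fwdDiff1 g z₀ k := by
  unfold fwdDiff1; rw [← Finset.sum_add_distrib]
  exact Finset.sum_congr rfl fun i _ => by ring

lemma fwdDiff1_const_mul (c : ℂ) (f : ℂ → ℂ) (z₀ : ℂ) (k : ℕ) :
    fwdDiff1 (fun w => c * f w) z₀ k = c * fwdDiff1 f z₀ k := by
  unfold fwdDiff1; rw [Finset.mul_sum]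
  exact Finset.sum_congr rfl fun i _ => by ring

/-- closed form for iterated difference of `w ↦ (w-σ)⁻¹`. -/
lemma iterDiff_inv (z₀ : ℂ) : ∀ (k : ℕ) (σ : ℂ), (∀ j : ℕ, j ≤ k → z₀ - σ + j ≠ 0) →
    (fwdDiff (1:ℂ))^[k] (fun w => (w - σ)⁻¹) z₀
      = (-1) ^ k * k.factorial / ∏ j ∈ Finset.range (k+1), (z₀ - σ + j) := by
  intro k
  induction k with
  | zero =>
    intro σ h
    simp [Finset.prod_range_one, one_div]
  | succ k IH =>
    intro σ h
    rw [Function.iterate_succ_apply]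
    have hΔ : fwdDiff (1:ℂ) (fun w => (w - σ)⁻¹)
        = (fun w => (w - (σ - 1))⁻¹) + (-1 : ℂ) • (fun w => (w - σ)⁻¹) := by
      funext w
      simp only [fwdDiff, Pi.add_apply, Pi.smul_apply, smul_eq_mul]
      have : w + 1 - σ = w - (σ - 1) := by ring
      rw [this]; ring
    rw [hΔ, fwdDiff_iter_add, Pi.add_apply, fwdDiff_iter_const_smul, Pi.smul_apply, smul_eq_mul]
    have key : ∀ j : ℕ, z₀ - (σ - 1) + (j:ℂ) = z₀ - σ + ((j:ℕ)+1 : ℕ) := by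
      intro j; push_cast; ring
    rw [IH (σ - 1) (fun j hj => by rw [key j]; exact h (j+1) (by omega)),
        IH σ (fun j hj => h j (by omega))]
    set x := z₀ - σ with hx
    have hx0 : x ≠ 0 := by simpa using h 0 (by omega)
    have hprod1 : ∏ j ∈ Finset.range (k+1), (z₀ - (σ-1) + (j:ℂ))
        = ∏ j ∈ Finset.range (k+1), (x + ((j:ℂ)+1)) := by
      refine Finset.prod_congr rfl fun j _ => by rw [key j]; push_cast; ring
    rw [hprod1]
    set b2 := ∏ j ∈ Finset.range (k+1), (x + (j:ℂ)) with hb2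
    set b1 := ∏ j ∈ Finset.range (k+1), (x + ((j:ℂ)+1)) with hb1
    have h1 : b1 ≠ 0 := by
      refine Finset.prod_ne_zero_iff.2 fun j hj => ?_
      have hj' : j + 1 ≤ k + 1 := by simp at hj; omega
      have := h (j+1) hj'
      rw [show x + ((j:ℂ)+1) = z₀ - σ + ((j+1 : ℕ):ℂ) by push_cast [hx]; ring]
      exact this
    have h2 : b2 ≠ 0 := by
      refine Finset.prod_ne_zero_iff.2 fun j hj => ?_
      exact h j (by simp at hj; omega)
    have h3 : x + ((k:ℂ)+1) ≠ 0 := by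
      have := h (k+1) (by omega)
      rw [show x + ((k:ℂ)+1) = z₀ - σ + ((k+1 : ℕ):ℂ) by push_cast [hx]; ring]
      exact this
    have hid : b1 * x = b2 * (x + ((k:ℂ)+1)) := by
      rw [hb1, hb2]
      have l : (∏ j ∈ Finset.range (k+1), (x + ((j:ℂ)+1))) * x
          = ∏ j ∈ Finset.range (k+2), (x + (j:ℂ)) := by
        rw [Finset.prod_range_succ' (fun j => (x + (j:ℂ)))]
        simp only [Nat.cast_add, Nat.cast_one, Nat.cast_zero, add_zero]
      have r : (∏ j ∈ Finset.range (k+1), (x + (j:ℂ))) * (x + ((k:ℂ)+1))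
          = ∏ j ∈ Finset.range (k+2), (x + (j:ℂ)) := by
        conv_rhs => rw [Finset.prod_range_succ]
        push_cast; ring
      rw [l, r]
    have hsplit : ∏ j ∈ Finset.range (k+1+1), (x + (j:ℂ))
        = b2 * (x + ((k:ℂ)+1)) := by
      conv_lhs => rw [Finset.prod_range_succ]
      rw [← hb2]; push_cast; ring
    rw [hsplit]
    have e1 : ((-1:ℂ))^k * k.factorial / b1 = ((-1:ℂ))^k * k.factorial * x / (b2 * (x + ((k:ℂ)+1))) := by
      rw [← hid, mul_comm b1 x, ← mul_div_mul_left (((-1:ℂ))^k * k.factorial) b1 hx0]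
      ring_nf
    rw [e1]
    push_cast [Nat.factorial_succ]
    field_simp
    ring

def Efun (z₀ z : ℂ) (n : ℕ) (σ : ℂ) : ℂ :=
  (z - σ)⁻¹ * ∏ i ∈ Finset.range n, ((z₀ - z + i) * (z₀ - σ + i)⁻¹)

lemma ne_zero_of_re_pos {x : ℂ} (hx : 0 < x.re) : x ≠ 0 := by
  intro h; rw [h] at hx; simp at hx

lemma aux_ne (z₀ σ : ℂ) (hσ : σ.re < z₀.re) (i : ℕ) : z₀ - σ + (i:ℂ) ≠ 0 := by
  refine ne_zero_of_re_pos ?_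
  simp only [Complex.add_re, Complex.sub_re, Complex.natCast_re]
  have : (0:ℝ) ≤ i := Nat.cast_nonneg i
  linarith

lemma telescope (z₀ z : ℂ) (hz : z₀.re < z.re) (σ : ℂ) (hσ : σ.re < z₀.re) : ∀ n : ℕ,
    (z - σ)⁻¹ - ∑ k ∈ Finset.range n, genBinom (z - z₀) k * fwdDiff1 (fun w => (w - σ)⁻¹) z₀ k
      = Efun z₀ z n σ := by
  have hzσ : z - σ ≠ 0 := ne_zero_of_re_pos (by simp [Complex.sub_re]; linarith)
  intro n
  induction n with
  | zero => simp [Efun]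
  | succ n IH =>
    rw [Finset.sum_range_succ, sub_add_eq_sub_sub, IH]
    have hclosed : fwdDiff1 (fun w => (w - σ)⁻¹) z₀ n
        = (-1) ^ n * n.factorial / ∏ j ∈ Finset.range (n+1), (z₀ - σ + j) := by
      rw [fwdDiff1_eq_iter]
      exact iterDiff_inv z₀ n σ (fun j _ => aux_ne z₀ σ hσ j)
    rw [hclosed]
    unfold Efun genBinom
    set A := ∏ i ∈ Finset.range n, (z₀ - z + (i:ℂ)) with hA
    set B := ∏ i ∈ Finset.range n, (z₀ - σ + (i:ℂ)) with hB
    have hBn : B ≠ 0 := Finset.prod_ne_zero_iff.2 fun j _ => aux_ne z₀ σ hσ j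
    have hc : z₀ - σ + (n:ℂ) ≠ 0 := aux_ne z₀ σ hσ n
    have hfac : ((n.factorial : ℂ)) ≠ 0 := by
      exact_mod_cast Nat.cast_ne_zero.2 (Nat.factorial_ne_zero n)
    have hsign : (∏ i ∈ Finset.range n, (z - z₀ - (i:ℂ))) * (-1)^n = A := by
      have hpc : ((-1:ℂ))^n = ∏ _i ∈ Finset.range n, (-1:ℂ) := by
        rw [Finset.prod_const, Finset.card_range]
      rw [hpc, ← Finset.prod_mul_distrib, hA]
      exact Finset.prod_congr rfl fun i _ => by ring
    have hprods : ∏ i ∈ Finset.range n, ((z₀ - z + (i:ℂ)) * (z₀ - σ + i)⁻¹)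
        = A * B⁻¹ := by
      rw [Finset.prod_mul_distrib, Finset.prod_inv_distrib, hA, hB]
    have hprodsucc : ∏ i ∈ Finset.range (n+1), ((z₀ - z + (i:ℂ)) * (z₀ - σ + i)⁻¹)
        = A * B⁻¹ * ((z₀ - z + n) * (z₀ - σ + n)⁻¹) := by
      rw [Finset.prod_range_succ, hprods]
    have hBsucc : ∏ j ∈ Finset.range (n+1), (z₀ - σ + (j:ℂ)) = B * (z₀ - σ + n) := by
      rw [Finset.prod_range_succ, hB]
    rw [hprods, hprodsucc, hBsucc]
    rw [← hsign]
    field_simp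
    ring
/-! ### Analytic estimate: the remainder product tends to 0 locally uniformly -/

lemma harmonic_tail_tendsto (i₁ : ℕ) (h1 : 1 ≤ i₁) :
    Tendsto (fun n => ∑ i ∈ Finset.Ico i₁ n, (1 / (i:ℝ))) atTop atTop := by
  have H := Real.tendsto_sum_range_one_div_nat_succ_atTop
  have H2 : Tendsto (fun n => (∑ i ∈ Finset.range n, (1 / ((i:ℝ) + 1)))
      + -(∑ i ∈ Finset.range i₁, (1 / ((i:ℝ) + 1)))) atTop atTop :=
    tendsto_atTop_add_const_right atTop _ H
  refine tendsto_atTop_mono' atTop ?_ H2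
  filter_upwards [eventually_ge_atTop i₁] with n hn
  rw [← sub_eq_add_neg, ← Finset.sum_Ico_eq_sub _ hn]
  refine Finset.sum_le_sum fun i hi => ?_
  have hi1 : 1 ≤ i := le_trans h1 (Finset.mem_Ico.1 hi).1
  have h0 : (0:ℝ) < i := by exact_mod_cast hi1
  rw [div_le_div_iff₀ (by positivity) h0]
  linarith

set_option maxHeartbeats 1000000 in
lemma master_bound (β δ A B : ℝ) (hβ : 0 < β) (hδ : 0 < δ) (hB : 0 ≤ B) (hA : 0 ≤ A) :
    ∃ u : ℕ → ℝ, Tendsto u atTop (𝓝 0) ∧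
      ∀ (a b : ℂ), δ ≤ a.re → ‖a‖ ≤ A → b.re ≤ -β → ‖b‖ ≤ B →
        ∀ n, ∏ i ∈ Finset.range n, (‖b + i‖ / ‖a + i‖) ≤ u n := by
  set c : ℝ := δ + β with hc
  have hc0 : 0 < c := by positivity
  obtain ⟨N, hN⟩ := exists_nat_ge (max A (max (B^2/c) c))
  set i₁ : ℕ := N + 1 with hi₁
  have hi₁A : A ≤ i₁ := le_trans (le_trans (le_max_left _ _) hN) (by rw [hi₁]; push_cast; linarith)
  have hi₁B2 : B^2/c ≤ i₁ :=
    le_trans (le_trans (le_max_left _ _) (le_max_right _ _) |>.trans hN) (by rw [hi₁]; push_cast; linarith)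
  have hi₁c : c ≤ i₁ :=
    le_trans (le_trans (le_max_right _ _) (le_max_right _ _) |>.trans hN) (by rw [hi₁]; push_cast; linarith)
  have hii1 : 1 ≤ i₁ := by omega
  clear_value i₁
  clear hi₁ hN
  set D : ℝ := (B + i₁)/δ + 1 with hD
  have hD1 : 1 ≤ D := by
    rw [hD]
    have : 0 ≤ (B + i₁)/δ := by positivity
    linarith
  have hD0 : 0 ≤ D := by linarith
  refine ⟨fun n => D ^ i₁ * Real.exp (-(c/8) * ∑ i ∈ Finset.Ico i₁ n, (1 / (i:ℝ))), ?_, ?_⟩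
  · have h1 : Tendsto (fun n => -(c/8) * ∑ i ∈ Finset.Ico i₁ n, (1 / (i:ℝ))) atTop atBot :=
      Tendsto.const_mul_atTop_of_neg (by linarith : -(c/8) < 0)
        (harmonic_tail_tendsto i₁ hii1)
    have h2 := Real.tendsto_exp_atBot.comp h1
    have h3 := h2.const_mul (D ^ i₁)
    simpa using h3
  · intro a b ha hA' hb hB' n
    dsimp only
    have hnormai : ∀ i : ℕ, δ + i ≤ ‖a + i‖ := by
      intro i
      have h := Complex.re_le_norm (a + i)
      simp only [Complex.add_re, Complex.natCast_re] at h
      linarith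
    have hpos : ∀ i : ℕ, (0:ℝ) < ‖a + i‖ := fun i =>
      lt_of_lt_of_le (by positivity) (hnormai i)
    have hrnonneg : ∀ i : ℕ, 0 ≤ ‖b + i‖ / ‖a + i‖ := fun i =>
      div_nonneg (norm_nonneg _) (norm_nonneg _)
    have hbi : ∀ i : ℕ, ‖b + i‖ ≤ B + i := fun i => by
      calc ‖b + (i:ℂ)‖ ≤ ‖b‖ + ‖(i:ℂ)‖ := norm_add_le _ _
        _ = ‖b‖ + i := by rw [Complex.norm_natCast]
        _ ≤ B + i := by linarith
    have hrD : ∀ i : ℕ, i ≤ i₁ → ‖b + i‖ / ‖a + i‖ ≤ D := by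
      intro i hi
      have h1 : ‖b + i‖ ≤ B + i₁ := le_trans (hbi i) (by
        have : (i:ℝ) ≤ i₁ := by exact_mod_cast hi
        linarith)
      have h2 : δ ≤ ‖a + i‖ := le_trans (by linarith [Nat.cast_nonneg (α := ℝ) i]) (hnormai i)
      calc ‖b + i‖ / ‖a + i‖ ≤ (B + i₁) / δ :=
            div_le_div₀ (by positivity) h1 hδ h2
        _ ≤ D := by rw [hD]; linarith
    have hrexp : ∀ i : ℕ, i₁ ≤ i → ‖b + i‖ / ‖a + i‖ ≤ Real.exp (-(c/8) * (1/i)) := by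
      intro i hi
      have hii : (i₁:ℝ) ≤ i := by exact_mod_cast hi
      have hiA : A ≤ i := le_trans hi₁A hii
      have hiB2 : B^2 ≤ i * c := by
        have h3 : B^2/c ≤ i := le_trans hi₁B2 hii
        calc B^2 = (B^2/c) * c := by field_simp
          _ ≤ i * c := by nlinarith
      have hic : c ≤ i := le_trans hi₁c hii
      have hipos : (0:ℝ) < i := lt_of_lt_of_le hc0 hic
      have hsqa : ‖a + i‖^2 = (a.re + i)^2 + a.im^2 := by
        rw [Complex.sq_norm, Complex.normSq_apply]
        simp only [Complex.add_re, Complex.add_im, Complex.natCast_re, Complex.natCast_im]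
        ring
      have hsqb : ‖b + i‖^2 = (b.re + i)^2 + b.im^2 := by
        rw [Complex.sq_norm, Complex.normSq_apply]
        simp only [Complex.add_re, Complex.add_im, Complex.natCast_re, Complex.natCast_im]
        ring
      have hnb : ‖b‖^2 = b.re^2 + b.im^2 := by
        rw [Complex.sq_norm, Complex.normSq_apply]; ring
      have hdiff : i * c ≤ ‖a + i‖^2 - ‖b + i‖^2 := by
        rw [hsqa, hsqb]
        have h1 : c ≤ a.re - b.re := by rw [hc]; linarith
        have h2 : b.re^2 + b.im^2 ≤ B^2 := by
          rw [← hnb]; nlinarith [norm_nonneg b]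
        nlinarith
      have hub : ‖a + i‖ ≤ 2 * i := by
        calc ‖a + i‖ ≤ ‖a‖ + ‖(i:ℂ)‖ := norm_add_le _ _
          _ = ‖a‖ + i := by rw [Complex.norm_natCast]
          _ ≤ 2 * i := by linarith
      have h4i : (0:ℝ) < 4*(i:ℝ) := by linarith
      have hsq : (‖b + i‖ / ‖a + i‖)^2 ≤ 1 - c/(4*i) := by
        rw [div_pow, div_le_iff₀ (pow_pos (hpos i) 2)]
        have h4 : ‖a + i‖^2 ≤ 4 * i^2 := by nlinarith [hpos i, norm_nonneg (a + (i:ℂ))]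
        have h5 : ‖a + i‖^2 * (c/(4*i)) ≤ i * c := by
          rw [← mul_div_assoc, div_le_iff₀ h4i]
          nlinarith
        nlinarith
      have hexp : (‖b + i‖ / ‖a + i‖)^2 ≤ Real.exp (-(c/(4*i))) := by
        refine le_trans hsq ?_
        have := Real.add_one_le_exp (-(c/(4*i)))
        linarith
      calc ‖b + i‖ / ‖a + i‖
          = Real.sqrt ((‖b + i‖ / ‖a + i‖)^2) := (Real.sqrt_sq (hrnonneg i)).symm
        _ ≤ Real.sqrt (Real.exp (-(c/(4*i)))) := Real.sqrt_le_sqrt hexp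
        _ = Real.exp (-(c/(4*i))/2) := by
            rw [show Real.exp (-(c/(4*i))) = (Real.exp (-(c/(4*i))/2))^2 by
              rw [sq, ← Real.exp_add]; congr 1; ring]
            exact Real.sqrt_sq (Real.exp_nonneg _)
        _ = Real.exp (-(c/8) * (1/i)) := by ring_nf
    by_cases hcase : n ≤ i₁
    · have hIco : Finset.Ico i₁ n = ∅ := Finset.Ico_eq_empty (by omega)
      rw [hIco, Finset.sum_empty, mul_zero, Real.exp_zero, mul_one]
      calc ∏ i ∈ Finset.range n, (‖b + i‖ / ‖a + i‖)
          ≤ ∏ i ∈ Finset.range n, D := Finset.prod_le_prod (fun i _ => hrnonneg i)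
            (fun i hi => hrD i (by simp at hi; omega))
        _ = D ^ n := by rw [Finset.prod_const, Finset.card_range]
        _ ≤ D ^ i₁ := pow_le_pow_right₀ hD1 hcase
    · push_neg at hcase
      have hsplit : ∏ i ∈ Finset.range n, (‖b + i‖ / ‖a + i‖)
          = (∏ i ∈ Finset.Ico 0 i₁, (‖b + i‖ / ‖a + i‖))
            * ∏ i ∈ Finset.Ico i₁ n, (‖b + i‖ / ‖a + i‖) := by
        rw [Finset.prod_Ico_consecutive _ (Nat.zero_le i₁) hcase.le, ← Finset.range_eq_Ico]
      rw [hsplit]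
      have b1 : (∏ i ∈ Finset.Ico 0 i₁, (‖b + i‖ / ‖a + i‖)) ≤ D ^ i₁ := by
        calc (∏ i ∈ Finset.Ico 0 i₁, (‖b + i‖ / ‖a + i‖))
            ≤ ∏ i ∈ Finset.Ico 0 i₁, D := Finset.prod_le_prod (fun i _ => hrnonneg i)
              (fun i hi => hrD i (by simp at hi; omega))
          _ = D ^ i₁ := by rw [Finset.prod_const, Nat.card_Ico, Nat.sub_zero]
      have b2 : (∏ i ∈ Finset.Ico i₁ n, (‖b + i‖ / ‖a + i‖))
          ≤ Real.exp (-(c/8) * ∑ i ∈ Finset.Ico i₁ n, (1 / (i:ℝ))) := by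
        calc (∏ i ∈ Finset.Ico i₁ n, (‖b + i‖ / ‖a + i‖))
            ≤ ∏ i ∈ Finset.Ico i₁ n, Real.exp (-(c/8) * (1/i)) :=
              Finset.prod_le_prod (fun i _ => hrnonneg i)
                (fun i hi => hrexp i (Finset.mem_Ico.1 hi).1)
          _ = Real.exp (∑ i ∈ Finset.Ico i₁ n, (-(c/8) * (1/(i:ℝ)))) := (Real.exp_sum _ _).symm
          _ = Real.exp (-(c/8) * ∑ i ∈ Finset.Ico i₁ n, (1 / (i:ℝ))) := by
              rw [← Finset.mul_sum]
      exact mul_le_mul b1 b2 (Finset.prod_nonneg fun i _ => hrnonneg i) (by positivity)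
lemma Uopen (z₀ : ℂ) : IsOpen {σ : ℂ | σ.re < z₀.re} :=
  isOpen_lt Complex.continuous_re continuous_const

lemma Efun_tlu (z₀ z : ℂ) (hz : z₀.re < z.re) :
    TendstoLocallyUniformlyOn (fun n => Efun z₀ z n) (fun _ => 0) atTop
      {σ : ℂ | σ.re < z₀.re} := by
  rw [tendstoLocallyUniformlyOn_iff_forall_isCompact (Uopen z₀)]
  intro K hKU hK
  rcases K.eq_empty_or_nonempty with rfl | hne
  · exact tendstoUniformlyOn_empty
  obtain ⟨x₀, hx₀K, hx₀max⟩ := hK.exists_isMaxOn hne Complex.continuous_re.continuousOn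
  obtain ⟨xM, hxMK, hxMmax⟩ := hK.exists_isMaxOn hne continuous_norm.continuousOn
  have hδ : 0 < z₀.re - x₀.re := by
    have := hKU hx₀K; simp only [Set.mem_setOf_eq] at this; linarith
  have hβ : 0 < z.re - z₀.re := by linarith
  obtain ⟨u, hu0, hubound⟩ := master_bound (z.re - z₀.re) (z₀.re - x₀.re)
    (‖z₀‖ + ‖xM‖) (‖z₀ - z‖) hβ hδ (norm_nonneg _) (by positivity)
  rw [Metric.tendstoUniformlyOn_iff]
  intro ε hε
  have hcm : Tendsto (fun n => (z.re - x₀.re)⁻¹ * u n) atTop (𝓝 0) := by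
    simpa using hu0.const_mul (z.re - x₀.re)⁻¹
  filter_upwards [hcm.eventually_lt_const hε] with n hn σ hσK
  have hb : (z₀ - z).re ≤ -(z.re - z₀.re) := by simp [Complex.sub_re]
  have ha : z₀.re - x₀.re ≤ (z₀ - σ).re := by
    have := hx₀max hσK
    simp only [Set.mem_setOf_eq] at this
    simp only [Complex.sub_re]
    linarith
  have hA' : ‖z₀ - σ‖ ≤ ‖z₀‖ + ‖xM‖ := by
    have := hxMmax hσK
    simp only [Set.mem_setOf_eq] at this
    calc ‖z₀ - σ‖ ≤ ‖z₀‖ + ‖σ‖ := norm_sub_le _ _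
      _ ≤ ‖z₀‖ + ‖xM‖ := by linarith
  have hprod := hubound (z₀ - σ) (z₀ - z) ha hA' hb le_rfl n
  have hzne : (0:ℝ) < z.re - x₀.re := by linarith
  have hzσ : z.re - x₀.re ≤ ‖z - σ‖ := by
    have h := Complex.re_le_norm (z - σ)
    have h2 := hx₀max hσK
    simp only [Set.mem_setOf_eq] at h2
    simp only [Complex.sub_re] at h
    linarith
  have hinv : ‖(z - σ)⁻¹‖ ≤ (z.re - x₀.re)⁻¹ := by
    rw [norm_inv]
    exact inv_anti₀ hzne hzσ
  have hEnorm : ‖Efun z₀ z n σ‖ ≤ (z.re - x₀.re)⁻¹ * u n := by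
    have hE : ‖Efun z₀ z n σ‖ = ‖(z - σ)⁻¹‖
        * ∏ i ∈ Finset.range n, (‖(z₀ - z) + i‖ / ‖(z₀ - σ) + i‖) := by
      rw [Efun, norm_mul, norm_prod]
      congr 1
      exact Finset.prod_congr rfl fun i _ => by
        rw [norm_mul, norm_inv, div_eq_mul_inv]
    rw [hE]
    exact mul_le_mul hinv hprod (Finset.prod_nonneg fun i _ =>
      div_nonneg (norm_nonneg _) (norm_nonneg _)) (by positivity)
  calc dist 0 (Efun z₀ z n σ) = ‖Efun z₀ z n σ‖ := by rw [dist_comm, dist_zero_right]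
    _ ≤ (z.re - x₀.re)⁻¹ * u n := hEnorm
    _ < ε := hn

lemma eqOn_iter_deriv {U : Set ℂ} (hU : IsOpen U) {f g : ℂ → ℂ}
    (hfg : ∀ x ∈ U, f x = g x) (j : ℕ) : ∀ x ∈ U, deriv^[j] f x = deriv^[j] g x := by
  induction j with
  | zero => exact hfg
  | succ j IH =>
    intro x hx
    rw [Function.iterate_succ_apply', Function.iterate_succ_apply']
    exact Filter.EventuallyEq.deriv_eq
      (Filter.eventuallyEq_of_mem (hU.mem_nhds hx) fun y hy => IH y hy)

lemma deriv_iter_simple_sum {ι : Type} (s : Finset ι) (cc g : ι → ℂ) : ∀ (j : ℕ) (x : ℂ),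
    (∀ t ∈ s, x ≠ cc t) →
    deriv^[j] (fun y => ∑ t ∈ s, g t * (cc t - y)⁻¹) x
      = ∑ t ∈ s, g t * (j.factorial : ℂ) * ((cc t - x)⁻¹)^(j+1) := by
  intro j
  induction j with
  | zero => intro x hx; simp
  | succ j IH =>
    intro x hx
    rw [Function.iterate_succ_apply']
    have hV : IsOpen {y : ℂ | ∀ t ∈ s, y ≠ cc t} := by
      have he : {y : ℂ | ∀ t ∈ s, y ≠ cc t} = ⋂ t ∈ s, {cc t}ᶜ := by
        ext y; simp [Set.mem_iInter]
      rw [he]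
      exact isOpen_biInter_finset fun t _ => isOpen_compl_singleton
    have hev : deriv^[j] (fun y => ∑ t ∈ s, g t * (cc t - y)⁻¹)
        =ᶠ[nhds x] fun y => ∑ t ∈ s, g t * (j.factorial : ℂ) * ((cc t - y)⁻¹)^(j+1) :=
      Filter.eventuallyEq_of_mem (hV.mem_nhds hx) fun y hy => IH y hy
    rw [hev.deriv_eq]
    have hder : HasDerivAt (fun y => ∑ t ∈ s, g t * (j.factorial : ℂ) * ((cc t - y)⁻¹)^(j+1))
        (∑ t ∈ s, g t * ((j+1).factorial : ℂ) * ((cc t - x)⁻¹)^(j+1+1)) x := by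
      apply HasDerivAt.fun_sum
      intro t ht
      have h0 : cc t - x ≠ 0 := sub_ne_zero.2 (Ne.symm (hx t ht))
      have h1 : HasDerivAt (fun y => cc t - y) (-1) x := by
        simpa using (hasDerivAt_id x).const_sub (cc t)
      have h2 := h1.inv h0
      have h3 := h2.pow (j+1)
      have h4 := h3.const_mul (g t * (j.factorial : ℂ))
      refine h4.congr_deriv ?_
      simp only [Pi.inv_apply]
      rw [Nat.factorial_succ]
      push_cast
      simp only [add_tsub_cancel_right, neg_neg, div_eq_mul_inv, ← inv_pow]
      ring
    exact hder.deriv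
lemma diffOn_deriv {U : Set ℂ} (hU : IsOpen U) {f : ℂ → ℂ}
    (hf : DifferentiableOn ℂ f U) : DifferentiableOn ℂ (deriv f) U :=
  ((hf.analyticOnNhd hU).deriv).differentiableOn

lemma Efun_diff (z₀ z : ℂ) (hz : z₀.re < z.re) (n : ℕ) :
    DifferentiableOn ℂ (Efun z₀ z n) {σ : ℂ | σ.re < z₀.re} := by
  intro σ hσ
  simp only [Set.mem_setOf_eq] at hσ
  apply DifferentiableAt.differentiableWithinAt
  have hz0 : z - σ ≠ 0 := ne_zero_of_re_pos (by simp [Complex.sub_re]; linarith)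
  have h1 : DifferentiableAt ℂ (fun σ : ℂ => (z - σ)⁻¹) σ :=
    ((differentiableAt_const z).sub differentiableAt_id).inv hz0
  have h2 : DifferentiableAt ℂ
      (fun σ : ℂ => ∏ i ∈ Finset.range n, ((z₀ - z + i) * (z₀ - σ + i)⁻¹)) σ := by
    apply DifferentiableAt.fun_finsetProd
    intro i _
    exact (differentiableAt_const _).mul
      (((differentiableAt_const _).sub differentiableAt_id |>.add
        (differentiableAt_const _)).inv (aux_ne z₀ σ hσ i))
  exact h1.mul h2

lemma Efun_iter_tlu (z₀ z : ℂ) (hz : z₀.re < z.re) : ∀ j : ℕ,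
    TendstoLocallyUniformlyOn (fun n => deriv^[j] (Efun z₀ z n)) (fun _ => 0) atTop
      {σ : ℂ | σ.re < z₀.re}
    ∧ ∀ n, DifferentiableOn ℂ (deriv^[j] (Efun z₀ z n)) {σ : ℂ | σ.re < z₀.re} := by
  intro j
  induction j with
  | zero => exact ⟨Efun_tlu z₀ z hz, fun n => Efun_diff z₀ z hz n⟩
  | succ j IH =>
    have hd := IH.1.deriv (Filter.Eventually.of_forall IH.2) (Uopen z₀)
    have heq : (deriv ∘ fun n => deriv^[j] (Efun z₀ z n))
        = fun n => deriv^[j+1] (Efun z₀ z n) := by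
      funext n
      rw [Function.comp_apply, Function.iterate_succ_apply']
    have heq0 : deriv (fun _ : ℂ => (0:ℂ)) = fun _ => 0 := by
      funext x; simp
    rw [heq, heq0] at hd
    refine ⟨hd, fun n => ?_⟩
    rw [Function.iterate_succ_apply']
    exact diffOn_deriv (Uopen z₀) (IH.2 n)
def comboS (n : ℕ) : Finset (ℕ × ℕ) := insert (n, n+1) (Finset.range n ×ˢ Finset.range (n+1))

def comboC (z z₀ : ℂ) (n : ℕ) (p : ℕ × ℕ) : ℂ := if p.1 = n then z else z₀ + p.2

def comboG (z z₀ : ℂ) (n : ℕ) (p : ℕ × ℕ) : ℂ :=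
  if p.1 = n then 1 else -(genBinom (z - z₀) p.1 * (p.1.choose p.2 : ℂ) * (-1)^(p.1 - p.2))

lemma combo_sum (z z₀ : ℂ) (n : ℕ) (F : ℂ → ℂ) :
    ∑ p ∈ comboS n, comboG z z₀ n p * F (comboC z z₀ n p)
      = F z - ∑ k ∈ Finset.range n, genBinom (z - z₀) k * fwdDiff1 F z₀ k := by
  unfold comboS comboG comboC
  rw [Finset.sum_insert (by simp)]
  simp only [if_pos rfl]
  rw [Finset.sum_product]
  have hinner : ∀ k ∈ Finset.range n,
      (∑ i ∈ Finset.range (n+1),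
        (if (k, i).1 = n then (1:ℂ)
          else -(genBinom (z - z₀) (k,i).1 * ((k,i).1.choose (k,i).2 : ℂ) * (-1)^((k,i).1 - (k,i).2)))
        * F (if (k, i).1 = n then z else z₀ + (k,i).2))
      = -(genBinom (z - z₀) k * fwdDiff1 F z₀ k) := by
    intro k hk
    have hkn : k ≠ n := by simp at hk; omega
    have h1 : ∀ i ∈ Finset.range (n+1),
        (if (k, i).1 = n then (1:ℂ)
          else -(genBinom (z - z₀) (k,i).1 * ((k,i).1.choose (k,i).2 : ℂ) * (-1)^((k,i).1 - (k,i).2)))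
        * F (if (k, i).1 = n then z else z₀ + (k,i).2)
        = -(genBinom (z - z₀) k * (((k.choose i : ℂ)) * (-1)^(k - i) * F (z₀ + i))) := by
      intro i _
      simp only [if_neg hkn]
      ring
    rw [Finset.sum_congr rfl h1, Finset.sum_neg_distrib, neg_inj, ← Finset.mul_sum]
    congr 1
    rw [fwdDiff1]
    refine (Finset.sum_subset ?_ ?_).symm
    · intro i hi
      have hklt : k < n := Finset.mem_range.1 hk
      simp at hi ⊢
      omega
    · intro i _ hi
      simp only [Finset.mem_range, not_lt] at hi
      rw [Nat.choose_eq_zero_of_lt (by omega)]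
      simp
  rw [Finset.sum_congr rfl hinner, Finset.sum_neg_distrib]
  simp only [eq_self_iff_true, if_true]
  ring

set_option maxHeartbeats 1000000 in
lemma piece (z₀ z : ℂ) (hz : z₀.re < z.re) (σ : ℂ) (hσ : σ.re < z₀.re) (m : ℕ) :
    Tendsto (fun n => ∑ k ∈ Finset.range n, genBinom (z - z₀) k *
      fwdDiff1 (fun w => ((w - σ)⁻¹)^(m+1)) z₀ k) atTop (𝓝 (((z - σ)⁻¹)^(m+1))) := by
  have htend := (Efun_iter_tlu z₀ z hz m).1.tendsto_at
    (show σ ∈ {σ : ℂ | σ.re < z₀.re} from hσ)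
  have hfac : ((m.factorial : ℂ)) ≠ 0 := by
    exact_mod_cast Nat.cast_ne_zero.2 (Nat.factorial_ne_zero m)
  have hkey : ∀ n, deriv^[m] (Efun z₀ z n) σ
      = (m.factorial : ℂ) * (((z - σ)⁻¹)^(m+1)
        - ∑ k ∈ Finset.range n, genBinom (z - z₀) k
            * fwdDiff1 (fun w => ((w - σ)⁻¹)^(m+1)) z₀ k) := by
    intro n
    have hcombo : ∀ y ∈ {σ : ℂ | σ.re < z₀.re},
        Efun z₀ z n y = ∑ p ∈ comboS n, comboG z z₀ n p * (comboC z z₀ n p - y)⁻¹ := by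
      intro y hy
      simp only [Set.mem_setOf_eq] at hy
      exact (telescope z₀ z hz y hy n).symm.trans (combo_sum z z₀ n (fun w => (w - y)⁻¹)).symm
    have hne : ∀ p ∈ comboS n, σ ≠ comboC z z₀ n p := by
      intro p _
      unfold comboC
      split_ifs
      · intro heq
        have := congrArg Complex.re heq
        linarith
      · intro heq
        have := congrArg Complex.re heq
        simp only [Complex.add_re, Complex.natCast_re] at this
        have h0 : (0:ℝ) ≤ (p.2:ℝ) := Nat.cast_nonneg _
        linarith
    calc deriv^[m] (Efun z₀ z n) σ
        = deriv^[m] (fun y => ∑ p ∈ comboS n, comboG z z₀ n p * (comboC z z₀ n p - y)⁻¹) σ :=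
          eqOn_iter_deriv (Uopen z₀) hcombo m σ hσ
      _ = ∑ p ∈ comboS n, comboG z z₀ n p * (m.factorial : ℂ) * ((comboC z z₀ n p - σ)⁻¹)^(m+1) :=
          deriv_iter_simple_sum (comboS n) (comboC z z₀ n) (comboG z z₀ n) m σ hne
      _ = ∑ p ∈ comboS n, comboG z z₀ n p
            * ((fun w => (m.factorial : ℂ) * ((w - σ)⁻¹)^(m+1)) (comboC z z₀ n p)) := by
          exact Finset.sum_congr rfl fun p _ => by ring
      _ = (fun w => (m.factorial : ℂ) * ((w - σ)⁻¹)^(m+1)) z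
            - ∑ k ∈ Finset.range n, genBinom (z - z₀) k
                * fwdDiff1 (fun w => (m.factorial : ℂ) * ((w - σ)⁻¹)^(m+1)) z₀ k :=
          combo_sum z z₀ n (fun w => (m.factorial : ℂ) * ((w - σ)⁻¹)^(m+1))
      _ = (m.factorial : ℂ) * (((z - σ)⁻¹)^(m+1)
            - ∑ k ∈ Finset.range n, genBinom (z - z₀) k
                * fwdDiff1 (fun w => ((w - σ)⁻¹)^(m+1)) z₀ k) := by
          simp only [fwdDiff1_const_mul]
          rw [mul_sub, Finset.mul_sum]
          congr 1
          exact Finset.sum_congr rfl fun k _ => by ring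
  have heq2 : ∀ n, ∑ k ∈ Finset.range n, genBinom (z - z₀) k
      * fwdDiff1 (fun w => ((w - σ)⁻¹)^(m+1)) z₀ k
      = ((z - σ)⁻¹)^(m+1) - (m.factorial : ℂ)⁻¹ * deriv^[m] (Efun z₀ z n) σ := by
    intro n
    rw [hkey n]
    field_simp
    ring
  have hlim : Tendsto (fun n => ((z - σ)⁻¹)^(m+1)
      - (m.factorial : ℂ)⁻¹ * deriv^[m] (Efun z₀ z n) σ)
      atTop (𝓝 (((z - σ)⁻¹)^(m+1) - (m.factorial : ℂ)⁻¹ * 0)) :=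
    tendsto_const_nhds.sub (htend.const_mul _)
  rw [mul_zero, sub_zero] at hlim
  exact Tendsto.congr (fun n => (heq2 n).symm) hlim
/-! ### Polynomial case -/

open Polynomial in
lemma diff_poly_eq (p : Polynomial ℂ) : fwdDiff (1:ℂ) (fun w => p.eval w)
    = fun w => (p.comp (X + C 1) - p).eval w := by
  funext w
  simp [fwdDiff, Polynomial.eval_comp]

lemma iter_diff_zero : ∀ (j : ℕ) (y : ℂ), (fwdDiff (1:ℂ))^[j] (fun _ => (0:ℂ)) y = 0 := by
  intro j
  induction j with
  | zero => intro y; simp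
  | succ j IH =>
    intro y
    rw [Function.iterate_succ_apply]
    have h : fwdDiff (1:ℂ) (fun _ => (0:ℂ)) = fun _ => 0 := funext fun w => sub_self _
    rw [h]
    exact IH y

open Polynomial in
lemma natDeg_drop (p : Polynomial ℂ) (h0 : p.natDegree ≠ 0) :
    (p.comp (X + C 1) - p).natDegree < p.natDegree := by
  have hq : (X + C (1:ℂ)).natDegree = 1 := natDegree_X_add_C 1
  have hp0 : p ≠ 0 := fun h => h0 (by simp [h])
  have h1 : (p.comp (X + C 1)).natDegree = p.natDegree := by
    rw [natDegree_comp, hq, mul_one]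
  have h2 : (p.comp (X + C 1)).leadingCoeff = p.leadingCoeff := by
    rw [leadingCoeff_comp (by rw [hq]; omega), (monic_X_add_C (1:ℂ)).leadingCoeff,
      one_pow, mul_one]
  have hc0 : p.comp (X + C 1) ≠ 0 := by
    intro h
    apply hp0
    rw [h, leadingCoeff_zero] at h2
    exact leadingCoeff_eq_zero.1 h2.symm
  have hdeg : (p.comp (X + C 1)).degree = p.degree := by
    rw [degree_eq_natDegree hc0, degree_eq_natDegree hp0, h1]
  by_cases hz : p.comp (X + C 1) - p = 0
  · rw [hz]; simpa using Nat.pos_of_ne_zero h0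
  · have hlt := degree_sub_lt hdeg hc0 h2
    calc (p.comp (X + C 1) - p).natDegree < (p.comp (X+C 1)).natDegree :=
          natDegree_lt_natDegree hz hlt
      _ = p.natDegree := h1

open Polynomial in
lemma iter_poly_zero : ∀ (d : ℕ) (p : Polynomial ℂ), p.natDegree ≤ d → ∀ (k : ℕ), d < k →
    ∀ y : ℂ, (fwdDiff (1:ℂ))^[k] (fun w => p.eval w) y = 0 := by
  intro d
  induction d with
  | zero =>
    intro p hp k hk y
    obtain ⟨k', rfl⟩ : ∃ k', k = k'+1 := ⟨k-1, by omega⟩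
    rw [Function.iterate_succ_apply, diff_poly_eq]
    obtain ⟨c, rfl⟩ := natDegree_eq_zero.1 (le_antisymm hp (Nat.zero_le _))
    have : (C c).comp (X + Polynomial.C 1) - C c = 0 := by simp
    rw [this]
    simpa using iter_diff_zero k' y
  | succ d IH =>
    intro p hp k hk y
    obtain ⟨k', rfl⟩ : ∃ k', k = k'+1 := ⟨k-1, by omega⟩
    rw [Function.iterate_succ_apply, diff_poly_eq]
    by_cases h0 : p.natDegree = 0
    · obtain ⟨c, rfl⟩ := natDegree_eq_zero.1 h0
      have : (C c).comp (X + Polynomial.C 1) - C c = 0 := by simp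
      rw [this]
      simpa using iter_diff_zero k' y
    · have hdrop := natDeg_drop p h0
      exact IH _ (by omega) k' (by omega) y

lemma genBinom_nat (mm k : ℕ) : genBinom (mm : ℂ) k = (mm.choose k : ℂ) := by
  unfold genBinom
  by_cases h : k ≤ mm
  · have hprod : ∏ i ∈ Finset.range k, ((mm : ℂ) - i) = (mm.descFactorial k : ℂ) := by
      rw [Nat.descFactorial_eq_prod_range, Nat.cast_prod]
      refine Finset.prod_congr rfl fun i hi => ?_
      have him : i ≤ mm := by have := Finset.mem_range.1 hi; omega
      push_cast [Nat.cast_sub him]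
      ring
    rw [hprod, Nat.descFactorial_eq_factorial_mul_choose]
    push_cast
    rw [mul_comm, mul_div_assoc]
    rw [div_self (by exact_mod_cast Nat.cast_ne_zero.2 (Nat.factorial_ne_zero k)), mul_one]
  · have h1 : ∏ i ∈ Finset.range k, ((mm : ℂ) - i) = 0 :=
      Finset.prod_eq_zero (i := mm) (Finset.mem_range.2 (by omega)) (by simp)
    rw [h1, Nat.choose_eq_zero_of_lt (by omega)]
    simp

open Polynomial in
lemma poly_case (z₀ z : ℂ) (p : Polynomial ℂ) :
    Tendsto (fun n => ∑ k ∈ Finset.range n, genBinom (z - z₀) k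
      * fwdDiff1 (fun w => p.eval w) z₀ k) atTop (𝓝 (p.eval z)) := by
  set d := p.natDegree with hd
  have hvanish : ∀ k, d < k → fwdDiff1 (fun w => p.eval w) z₀ k = 0 := by
    intro k hk
    rw [fwdDiff1_eq_iter]
    exact iter_poly_zero d p le_rfl k hk z₀
  have hstab : ∀ n ≥ d + 1, (∑ k ∈ Finset.range n, genBinom (z - z₀) k
      * fwdDiff1 (fun w => p.eval w) z₀ k)
      = ∑ k ∈ Finset.range (d+1), genBinom (z - z₀) k * fwdDiff1 (fun w => p.eval w) z₀ k := by
    intro n hn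
    refine (Finset.sum_subset (Finset.range_subset_range.2 hn) ?_).symm
    intro k _ hk
    rw [hvanish k (by simp at hk; omega)]
    ring
  have hlim := tendsto_atTop_of_eventually_const hstab
  -- now identify the limit with p.eval z
  set Apoly : Polynomial ℂ := ∑ k ∈ Finset.range (d+1),
    Polynomial.C (fwdDiff1 (fun w => p.eval w) z₀ k / (k.factorial : ℂ))
      * ∏ i ∈ Finset.range k, (X - Polynomial.C (z₀ + i)) with hApoly
  have hAeval : ∀ w : ℂ, Apoly.eval w
      = ∑ k ∈ Finset.range (d+1), genBinom (w - z₀) k * fwdDiff1 (fun w => p.eval w) z₀ k := by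
    intro w
    rw [hApoly, eval_finset_sum]
    refine Finset.sum_congr rfl fun k _ => ?_
    rw [eval_mul, eval_C, eval_prod]
    unfold genBinom
    have : ∏ i ∈ Finset.range k, eval w (X - Polynomial.C (z₀ + i))
        = ∏ i ∈ Finset.range k, (w - z₀ - i) := by
      refine Finset.prod_congr rfl fun i _ => ?_
      simp [eval_sub]
      ring
    rw [this]
    ring
  have hroot : ∀ mm : ℕ, Apoly.eval (z₀ + mm) = p.eval (z₀ + mm) := by
    intro mm
    rw [hAeval]
    have hsimp : ∀ k, genBinom (z₀ + mm - z₀) k = (mm.choose k : ℂ) := by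
      intro k
      rw [show z₀ + (mm:ℂ) - z₀ = (mm:ℂ) by ring, genBinom_nat]
    have hGN := shift_eq_sum_fwdDiff_iter (1:ℂ) (fun w => p.eval w) mm z₀
    simp only [nsmul_eq_mul, mul_one, smul_eq_mul] at hGN
    have hGN' : p.eval (z₀ + mm)
        = ∑ k ∈ Finset.range (mm+1), (mm.choose k : ℂ) * fwdDiff1 (fun w => p.eval w) z₀ k := by
      rw [hGN]
      exact Finset.sum_congr rfl fun k _ => by rw [fwdDiff1_eq_iter]
    rw [hGN']
    have hext : ∀ N, max (d+1) (mm+1) ≥ N →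
        True := fun _ _ => trivial
    -- both sums equal the sum over range (max (d+1) (mm+1))
    have h1 : ∑ k ∈ Finset.range (d+1), genBinom (z₀ + mm - z₀) k
        * fwdDiff1 (fun w => p.eval w) z₀ k
        = ∑ k ∈ Finset.range (max (d+1) (mm+1)), genBinom (z₀ + mm - z₀) k
        * fwdDiff1 (fun w => p.eval w) z₀ k := by
      refine Finset.sum_subset (Finset.range_subset_range.2 (le_max_left _ _)) ?_
      intro k _ hk
      rw [hvanish k (by simp at hk; omega)]
      ring
    have h2 : ∑ k ∈ Finset.range (mm+1), (mm.choose k : ℂ)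
        * fwdDiff1 (fun w => p.eval w) z₀ k
        = ∑ k ∈ Finset.range (max (d+1) (mm+1)), (mm.choose k : ℂ)
        * fwdDiff1 (fun w => p.eval w) z₀ k := by
      refine Finset.sum_subset (Finset.range_subset_range.2 (le_max_right _ _)) ?_
      intro k _ hk
      rw [Nat.choose_eq_zero_of_lt (show mm < k by simp at hk; omega)]
      simp
    rw [h1, h2]
    exact Finset.sum_congr rfl fun k _ => by rw [hsimp k]
  have hApeq : Apoly = p := by
    by_contra hne
    have hsub : Apoly - p ≠ 0 := sub_ne_zero.2 hne
    apply hsub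
    apply Polynomial.eq_zero_of_infinite_isRoot
    refine Set.infinite_of_injective_forall_mem
      (f := fun mm : ℕ => z₀ + (mm : ℂ)) ?_ ?_
    · intro a b hab
      have h1 : (a : ℂ) = b := add_left_cancel hab
      exact_mod_cast h1
    · intro mm
      simp only [Set.mem_setOf_eq, IsRoot.def, eval_sub]
      rw [hroot mm]
      ring
  rw [← hAeval z, hApeq] at hlim
  exact hlim
/-! ### Rational function case, by induction on the degree of the denominator -/

open Polynomial in
set_option maxHeartbeats 1000000 in
lemma rational_case : ∀ (D : ℕ) (P Q : Polynomial ℂ), Q.natDegree ≤ D → Q ≠ 0 → ∀ (z₀ : ℂ),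
    (∀ σ : ℂ, Q.eval σ = 0 → σ.re < z₀.re) → ∀ z : ℂ, z₀.re < z.re →
    Tendsto (fun n => ∑ k ∈ Finset.range n, genBinom (z - z₀) k
      * fwdDiff1 (fun w => P.eval w / Q.eval w) z₀ k) atTop (𝓝 (P.eval z / Q.eval z)) := by
  intro D
  induction D with
  | zero =>
    intro P Q hdeg hQ0 z₀ hroots z hz
    obtain ⟨c, hc⟩ := natDegree_eq_zero.1 (le_antisymm hdeg (Nat.zero_le _))
    have hc0 : c ≠ 0 := fun h => hQ0 (by rw [← hc, h]; simp)
    have hfun : (fun w => P.eval w / Q.eval w) = fun w => (Polynomial.C c⁻¹ * P).eval w := by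
      funext w
      rw [← hc]
      simp [div_eq_inv_mul]
    rw [hfun, show P.eval z / Q.eval z = (Polynomial.C c⁻¹ * P).eval z by rw [← hc]; simp [div_eq_inv_mul]]
    exact poly_case z₀ z _
  | succ D IH =>
    intro P Q hdeg hQ0 z₀ hroots z hz
    by_cases hD : Q.natDegree ≤ D
    · exact IH P Q hD hQ0 z₀ hroots z hz
    have hQn : Q.natDegree = D + 1 := by omega
    have hQdeg : 0 < Q.degree := by
      rw [Polynomial.degree_eq_natDegree hQ0, hQn]
      exact_mod_cast Nat.succ_pos D
    obtain ⟨σ, hσ⟩ := Complex.exists_root hQdeg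
    have hσre : σ.re < z₀.re := hroots σ hσ
    have hm1 : 0 < Q.rootMultiplicity σ := (Polynomial.rootMultiplicity_pos hQ0).2 hσ
    obtain ⟨m', hmm⟩ : ∃ m', Q.rootMultiplicity σ = m' + 1 :=
      ⟨Q.rootMultiplicity σ - 1, by omega⟩
    set Q₂ : Polynomial ℂ := Q /ₘ (X - Polynomial.C σ) ^ (Q.rootMultiplicity σ) with hQ₂def
    have hfact : (X - Polynomial.C σ) ^ (m' + 1) * Q₂ = Q := by
      rw [← hmm]
      exact Polynomial.pow_mul_divByMonic_rootMultiplicity_eq Q σ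
    have hQ₂σ : Q₂.eval σ ≠ 0 :=
      Polynomial.eval_divByMonic_pow_rootMultiplicity_ne_zero σ hQ0
    have hQ₂0 : Q₂ ≠ 0 := fun h => hQ₂σ (by rw [h]; simp)
    set c : ℂ := P.eval σ / Q₂.eval σ with hcdef
    have hPr : (P - Polynomial.C c * Q₂).IsRoot σ := by
      simp only [IsRoot.def, eval_sub, eval_mul, eval_C, hcdef]
      field_simp
      simp
    obtain ⟨P₁, hP₁⟩ := (dvd_iff_isRoot.2 hPr)
    set Q' : Polynomial ℂ := (X - Polynomial.C σ) ^ m' * Q₂ with hQ'def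
    have hXσ : (X - Polynomial.C σ) ≠ 0 := X_sub_C_ne_zero σ
    have hQ'0 : Q' ≠ 0 := mul_ne_zero (pow_ne_zero _ hXσ) hQ₂0
    have hQQ' : Q = (X - Polynomial.C σ) * Q' := by
      rw [hQ'def, ← hfact, ← mul_assoc, ← pow_succ']
    have hQ'deg : Q'.natDegree ≤ D := by
      have h1 : Q.natDegree = 1 + Q'.natDegree := by
        rw [hQQ', Polynomial.natDegree_mul hXσ hQ'0, natDegree_X_sub_C]
      omega
    have hroots' : ∀ τ : ℂ, Q'.eval τ = 0 → τ.re < z₀.re := by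
      intro τ hτ
      refine hroots τ ?_
      rw [hQQ', eval_mul, hτ, mul_zero]
    have htail := IH P₁ Q' hQ'deg hQ'0 z₀ hroots' z hz
    have hpiece := piece z₀ z hz σ hσre m'
    -- the combined function
    set f : ℂ → ℂ := fun w => c * ((w - σ)⁻¹)^(m'+1) + P₁.eval w / Q'.eval w with hfdef
    have hcomb : Tendsto (fun n => ∑ k ∈ Finset.range n, genBinom (z - z₀) k
        * fwdDiff1 f z₀ k) atTop (𝓝 (c * ((z - σ)⁻¹)^(m'+1) + P₁.eval z / Q'.eval z)) := by
      have h1 := (hpiece.const_mul c).add htail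
      refine Tendsto.congr (fun n => ?_) h1
      rw [Finset.mul_sum, ← Finset.sum_add_distrib]
      refine Finset.sum_congr rfl fun k _ => ?_
      rw [hfdef, fwdDiff1_add, fwdDiff1_const_mul]
      ring
    -- identify values of f with P/Q at relevant points
    have hval : ∀ w : ℂ, z₀.re ≤ w.re → P.eval w / Q.eval w = f w := by
      intro w hw
      have hQw : Q.eval w ≠ 0 := fun h => absurd (hroots w h) (not_lt.2 hw)
      have hwσ : w - σ ≠ 0 := by
        rw [hQQ', eval_mul] at hQw
        simpa [sub_ne_zero] using fun h => hQw (by simp [eval_sub, h])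
      have hQ₂w : Q₂.eval w ≠ 0 := by
        intro h
        apply hQw
        rw [← hfact, eval_mul, h, mul_zero]
      have hQ'w : Q'.eval w = (w - σ)^m' * Q₂.eval w := by
        rw [hQ'def, eval_mul, eval_pow, eval_sub, eval_X, eval_C]
      have hQw' : Q.eval w = (w - σ)^(m'+1) * Q₂.eval w := by
        rw [← hfact, eval_mul, eval_pow, eval_sub, eval_X, eval_C]
      have hPw : P.eval w = c * Q₂.eval w + (w - σ) * P₁.eval w := by
        have := congrArg (Polynomial.eval w) hP₁
        simp only [eval_sub, eval_mul, eval_C, eval_X] at this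
        linear_combination this
      simp only [hfdef]
      rw [hPw, hQw', hQ'w]
      have hx : (w - σ) ≠ 0 := hwσ
      rw [inv_pow]
      field_simp
      ring
    have hfd : ∀ k, fwdDiff1 (fun w => P.eval w / Q.eval w) z₀ k = fwdDiff1 f z₀ k := by
      intro k
      refine fwdDiff1_congr z₀ k fun i _ => ?_
      refine hval _ ?_
      simp only [Complex.add_re, Complex.natCast_re]
      have : (0:ℝ) ≤ (i:ℝ) := Nat.cast_nonneg _
      linarith
    have hvz : P.eval z / Q.eval z = c * ((z - σ)⁻¹)^(m'+1) + P₁.eval z / Q'.eval z := by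
      rw [hval z (le_of_lt hz)]
    rw [show (𝓝 (P.eval z / Q.eval z))
      = 𝓝 (c * ((z - σ)⁻¹)^(m'+1) + P₁.eval z / Q'.eval z) by rw [hvz]]
    refine Tendsto.congr (fun n => ?_) hcomb
    exact Finset.sum_congr rfl fun k _ => by rw [hfd k]

theorem newton_series_of_rational_function
    (P Q : Polynomial ℝ) (hQ : Q ≠ 0) (z₀ : ℂ) (hz₀ : 0 < z₀.re)
    (hroots : ∀ σ : ℂ, (Polynomial.aeval σ) Q = 0 → σ.re < z₀.re)
    (R : ℂ → ℂ) (hR : ∀ w : ℂ, R w = (Polynomial.aeval w) P / (Polynomial.aeval w) Q)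
    (z : ℂ) (hz : z₀.re < z.re) :
    Tendsto (fun n : ℕ =>
        ∑ k ∈ Finset.range n, genBinom (z - z₀) k * fwdDiff1 R z₀ k)
      atTop (nhds (R z)) := by
  set Pc := P.map (algebraMap ℝ ℂ) with hPc
  set Qc := Q.map (algebraMap ℝ ℂ) with hQc
  have hQc0 : Qc ≠ 0 :=
    (Polynomial.map_ne_zero_iff (algebraMap ℝ ℂ).injective).2 hQ
  have haevalQ : ∀ w : ℂ, (Polynomial.aeval w) Q = Qc.eval w := fun w => by
    rw [hQc, Polynomial.eval_map, Polynomial.aeval_def]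
  have haevalP : ∀ w : ℂ, (Polynomial.aeval w) P = Pc.eval w := fun w => by
    rw [hPc, Polynomial.eval_map, Polynomial.aeval_def]
  have hRfun : R = fun w => Pc.eval w / Qc.eval w := by
    funext w
    rw [hR w, haevalP w, haevalQ w]
  have hroots' : ∀ σ : ℂ, Qc.eval σ = 0 → σ.re < z₀.re := fun σ h =>
    hroots σ (by rw [haevalQ σ]; exact h)
  have main := rational_case Qc.natDegree Pc Qc le_rfl hQc0 z₀ hroots' z hz
  rw [hRfun]
  exact main
end
end

section
/- Let h > 0 be real. Let m : ℝ → ℂ be Lebesgue measurable and Lebesgue integrable, let j ∈ ℕ, let a₀,…,a_j ∈ ℂ, N₀,…,N_j ∈ ℕ, and c₀,…,c_j ∈ ℝ with c_k ∉ {1/(2h) + ν/h : ν ∈ ℤ} for every k. Suppose f : ℝ → ℂ satisfies f(w) = ∫_ℝ m(x) e^{-2πi w x} dx + ∑_{k=0}^{j} a_k e^{-2πi c_k w} (2πi w)^{N_k} for every w ∈ ℝ. Then for every y ∈ ℝ, lim_{n→∞} Δ_h^n[f](y) / 2^n = 0, i.e. Δ_h^n[f](y) = o(2^n). -/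
open MeasureTheory Filter Finset Topology

noncomputable section

lemma aux_choose_identity (μ : ℂ) (n t : ℕ) :
    ∑ k ∈ Finset.range (n+1), (n.choose k : ℂ) * (-1)^(n-k) * μ^k * (k.choose t : ℂ)
      = (n.choose t : ℂ) * μ^t * (μ - 1)^(n-t) := by
  by_cases ht : t ≤ n
  · have h1 : ∑ k ∈ Finset.range (n+1), (n.choose k : ℂ) * (-1)^(n-k) * μ^k * (k.choose t : ℂ)
        = ∑ k ∈ Finset.Ico t (n+1), (n.choose k : ℂ) * (-1)^(n-k) * μ^k * (k.choose t : ℂ) := by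
      refine (Finset.sum_subset ?_ ?_).symm
      · intro x hx; simp only [Finset.mem_Ico] at hx; exact Finset.mem_range.2 hx.2
      · intro x hx hnx
        simp only [Finset.mem_range] at hx
        simp only [Finset.mem_Ico, not_and, not_le] at hnx
        have : x < t := by
          by_contra hcon
          push_neg at hcon
          exact hnx hcon hx
        rw [Nat.choose_eq_zero_of_lt this]; simp
    rw [h1, Finset.sum_Ico_eq_sum_range]
    have h2 : n + 1 - t = (n - t) + 1 := by omega
    rw [h2, sub_eq_add_neg, add_pow, Finset.mul_sum]
    refine Finset.sum_congr rfl fun i hi => ?_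
    simp only [Finset.mem_range] at hi
    have hle : t + i ≤ n := by omega
    have hcast : ((t+i).choose t : ℂ) * (n.choose (t+i) : ℂ)
        = (n.choose t : ℂ) * ((n-t).choose i : ℂ) := by
      rw [mul_comm]
      have := Nat.choose_mul (n := n) (Nat.le_add_right t i)
      have h' : t + i - t = i := by omega
      rw [h'] at this
      exact_mod_cast congrArg (Nat.cast : ℕ → ℂ) this
    have hsub : n - (t + i) = n - t - i := by omega
    rw [hsub, pow_add]
    calc (n.choose (t+i) : ℂ) * (-1)^(n-t-i) * (μ^t * μ^i) * ((t+i).choose t : ℂ)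
        = (((t+i).choose t : ℂ) * (n.choose (t+i) : ℂ)) * ((-1)^(n-t-i) * (μ^t * μ^i)) := by ring
      _ = ((n.choose t : ℂ) * ((n-t).choose i : ℂ)) * ((-1)^(n-t-i) * (μ^t * μ^i)) := by rw [hcast]
      _ = (n.choose t : ℂ) * μ^t * (μ^i * (-1)^(n-t-i) * ((n-t).choose i : ℂ)) := by ring
  · push_neg at ht
    rw [Nat.choose_eq_zero_of_lt ht]
    rw [Finset.sum_eq_zero, Nat.cast_zero, zero_mul, zero_mul]
    intro k hk
    simp only [Finset.mem_range] at hk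
    rw [Nat.choose_eq_zero_of_lt (by omega : k < t)]
    simp

def sterl : ℕ → ℕ → ℕ
  | 0, 0 => 1
  | 0, _+1 => 0
  | _+1, 0 => 0
  | d+1, t+1 => (t+1) * (sterl d (t+1) + sterl d t)

lemma sterl_eq_zero : ∀ d t : ℕ, d < t → sterl d t = 0
  | 0, _+1, _ => rfl
  | d+1, t+1, h => by
      have h1 : sterl d (t+1) = 0 := sterl_eq_zero d (t+1) (by omega)
      have h2 : sterl d t = 0 := sterl_eq_zero d t (by omega)
      simp [sterl, h1, h2]

lemma aux_k_choose (k t : ℕ) : k * k.choose t = t * k.choose t + k.choose (t+1) * (t+1) := by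
  rcases le_or_gt t k with h | h
  · rw [Nat.choose_succ_right_eq]
    have : t * k.choose t + k.choose t * (k - t) = (t + (k - t)) * k.choose t := by ring
    rw [this, Nat.add_sub_cancel' h]
  · rw [Nat.choose_eq_zero_of_lt h, Nat.choose_eq_zero_of_lt (by omega)]
    simp

lemma aux_pow_eq (d k : ℕ) : (k:ℂ)^d = ∑ t ∈ Finset.range (d+1), (sterl d t : ℂ) * (k.choose t : ℂ) := by
  induction d with
  | zero => simp [sterl]
  | succ d ih =>
    have key : ∀ t : ℕ, (k:ℂ) * (k.choose t : ℂ)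
        = (t : ℂ) * (k.choose t : ℂ) + (k.choose (t+1) : ℂ) * ((t:ℂ)+1) := by
      intro t
      have := aux_k_choose k t
      have := congrArg (Nat.cast : ℕ → ℂ) this
      push_cast at this
      convert this using 2
    calc (k:ℂ)^(d+1) = (k:ℂ) * (k:ℂ)^d := by ring
      _ = ∑ t ∈ Finset.range (d+1), (sterl d t : ℂ) * ((k:ℂ) * (k.choose t : ℂ)) := by
          rw [ih, Finset.mul_sum]; exact Finset.sum_congr rfl fun t _ => by ring
      _ = ∑ t ∈ Finset.range (d+1), ((sterl d t : ℂ) * ((t : ℂ) * (k.choose t : ℂ))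
            + (sterl d t : ℂ) * ((k.choose (t+1) : ℂ) * ((t:ℂ)+1))) := by
          exact Finset.sum_congr rfl fun t _ => by rw [key t]; ring
      _ = (∑ t ∈ Finset.range (d+1), (sterl d t : ℂ) * (t : ℂ) * (k.choose t : ℂ))
            + ∑ t ∈ Finset.range (d+1), (sterl d t : ℂ) * ((t:ℂ)+1) * (k.choose (t+1) : ℂ) := by
          rw [Finset.sum_add_distrib]
          congr 1 <;> exact Finset.sum_congr rfl fun t _ => by ring
      _ = (∑ t ∈ Finset.range (d+2), (sterl d t : ℂ) * (t : ℂ) * (k.choose t : ℂ))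
            + ∑ t ∈ Finset.range (d+1), (sterl d t : ℂ) * ((t:ℂ)+1) * (k.choose (t+1) : ℂ) := by
          rw [Finset.sum_range_succ (fun t => (sterl d t : ℂ) * (t : ℂ) * (k.choose t : ℂ)) (d+1)]
          rw [sterl_eq_zero d (d+1) (by omega)]
          simp
      _ = ∑ t ∈ Finset.range (d+1+1), (sterl (d+1) t : ℂ) * (k.choose t : ℂ) := by
          rw [Finset.sum_range_succ' (fun t => (sterl d t : ℂ) * (t : ℂ) * (k.choose t : ℂ)) (d+1)]
          rw [Finset.sum_range_succ' (fun t => (sterl (d+1) t : ℂ) * (k.choose t : ℂ)) (d+1)]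
          have h0 : (sterl (d+1) 0 : ℂ) = 0 := by norm_num [sterl]
          simp only [h0, Nat.cast_zero, mul_zero, zero_mul, add_zero]
          rw [← Finset.sum_add_distrib]
          refine Finset.sum_congr rfl fun t _ => ?_
          have hs : (sterl (d+1) (t+1) : ℂ) = ((t:ℂ)+1) * ((sterl d (t+1) : ℂ) + (sterl d t : ℂ)) := by
            show ((sterl (d+1) (t+1) : ℕ) : ℂ) = _
            rw [show sterl (d+1) (t+1) = (t+1) * (sterl d (t+1) + sterl d t) from rfl]
            push_cast; ring
          rw [hs]; push_cast; ring

lemma aux_norm_lt_two {μ : ℂ} (h1 : ‖μ‖ = 1) (h2 : μ ≠ -1) :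
    ‖μ - 1‖ < 2 := by
  have hnsq : Complex.normSq μ = 1 := by
    rw [← Complex.sq_norm, h1]; norm_num
  have hre : -1 < μ.re := by
    rcases lt_or_eq_of_le (neg_le_of_abs_le ((Complex.abs_re_le_norm μ).trans h1.le)) with h | h
    · exact h
    · exfalso
      have him : μ.im = 0 := by
        have := hnsq
        rw [Complex.normSq_apply, ← h] at this
        nlinarith
      exact h2 (by apply Complex.ext <;> simp [h.symm, him])
  have hsq : (‖μ - 1‖)^2 < 4 := by
    rw [Complex.sq_norm, Complex.normSq_apply]
    simp only [Complex.sub_re, Complex.sub_im, Complex.one_re, Complex.one_im, sub_zero]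
    have := hnsq
    rw [Complex.normSq_apply] at this
    nlinarith
  nlinarith [norm_nonneg (μ - 1)]

lemma aux_tendsto_choose {μ : ℂ} (hμ : ‖μ‖ ≤ 1) (hlt : ‖μ - 1‖ < 2) (t : ℕ) :
    Tendsto (fun n : ℕ => (n.choose t : ℂ) * μ^t * (μ - 1)^(n-t) / 2^n) atTop (nhds 0) := by
  set s : ℝ := max (‖μ - 1‖) 1 with hs
  have hs1 : 1 ≤ s := le_max_right _ _
  have hs2 : s < 2 := max_lt hlt one_lt_two
  have hs0 : 0 ≤ ‖μ - 1‖ := norm_nonneg _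
  have hbound : ∀ n : ℕ, ‖(n.choose t : ℂ) * μ^t * (μ - 1)^(n-t) / 2^n‖ ≤ (n:ℝ)^t * (s/2)^n := by
    intro n
    rw [norm_div, norm_mul, norm_mul, norm_pow, norm_pow, norm_pow]
    have e2 : ‖(2:ℂ)‖ = 2 := by norm_num
    rw [e2, div_pow, ← mul_div_assoc]
    have hc : ‖(n.choose t : ℂ)‖ ≤ (n:ℝ)^t := by
      rw [Complex.norm_natCast]
      exact_mod_cast Nat.choose_le_pow n t
    have hμt : ‖μ‖^t ≤ 1 := pow_le_one₀ (norm_nonneg _) hμ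
    have hst : ‖μ - 1‖^(n-t) ≤ s^n := by
      calc ‖μ - 1‖^(n-t) ≤ s^(n-t) :=
            pow_le_pow_left₀ (norm_nonneg _) (le_max_left _ _) _
        _ ≤ s^n := pow_le_pow_right₀ hs1 (Nat.sub_le n t)
    have hnum : ‖(n.choose t : ℂ)‖ * ‖μ‖^t * ‖μ - 1‖^(n-t) ≤ (n:ℝ)^t * s^n := by
      calc ‖(n.choose t : ℂ)‖ * ‖μ‖^t * ‖μ - 1‖^(n-t)
          ≤ ((n:ℝ)^t * 1) * s^n :=
            mul_le_mul (mul_le_mul hc hμt (by positivity) (by positivity)) hst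
              (by positivity) (by positivity)
        _ = (n:ℝ)^t * s^n := by ring
    exact (div_le_div_iff_of_pos_right (by positivity)).mpr hnum
  have hlim : Tendsto (fun n : ℕ => (n:ℝ)^t * (s/2)^n) atTop (nhds 0) :=
    tendsto_pow_const_mul_const_pow_of_lt_one t (by positivity) (by linarith)
  exact squeeze_zero_norm hbound hlim

lemma aux_tendsto_powsum {μ : ℂ} (hμ : ‖μ‖ ≤ 1) (hlt : ‖μ - 1‖ < 2) (d : ℕ) :
    Tendsto (fun n : ℕ =>
      (∑ k ∈ Finset.range (n+1), (n.choose k : ℂ) * (-1)^(n-k) * μ^k * (k:ℂ)^d) / 2^n)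
      atTop (nhds 0) := by
  have key : ∀ n : ℕ,
      (∑ k ∈ Finset.range (n+1), (n.choose k : ℂ) * (-1)^(n-k) * μ^k * (k:ℂ)^d) / 2^n
      = ∑ t ∈ Finset.range (d+1), (sterl d t : ℂ)
          * ((n.choose t : ℂ) * μ^t * (μ-1)^(n-t) / 2^n) := by
    intro n
    have step1 : (∑ k ∈ Finset.range (n+1), (n.choose k : ℂ) * (-1)^(n-k) * μ^k * (k:ℂ)^d)
        = ∑ t ∈ Finset.range (d+1), (sterl d t : ℂ)
            * ((n.choose t : ℂ) * μ^t * (μ-1)^(n-t)) := by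
      calc ∑ k ∈ Finset.range (n+1), (n.choose k : ℂ) * (-1)^(n-k) * μ^k * (k:ℂ)^d
          = ∑ k ∈ Finset.range (n+1), ∑ t ∈ Finset.range (d+1),
              (sterl d t : ℂ) * ((n.choose k : ℂ) * (-1)^(n-k) * μ^k * (k.choose t : ℂ)) := by
            refine Finset.sum_congr rfl fun k _ => ?_
            rw [aux_pow_eq d k, Finset.mul_sum]
            exact Finset.sum_congr rfl fun t _ => by ring
        _ = ∑ t ∈ Finset.range (d+1), (sterl d t : ℂ)
              * ∑ k ∈ Finset.range (n+1), (n.choose k : ℂ) * (-1)^(n-k) * μ^k * (k.choose t : ℂ) := by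
            rw [Finset.sum_comm]
            exact Finset.sum_congr rfl fun t _ => by rw [Finset.mul_sum]
        _ = ∑ t ∈ Finset.range (d+1), (sterl d t : ℂ)
              * ((n.choose t : ℂ) * μ^t * (μ-1)^(n-t)) := by
            exact Finset.sum_congr rfl fun t _ => by rw [aux_choose_identity]
    rw [step1, Finset.sum_div]
    exact Finset.sum_congr rfl fun t _ => by rw [mul_div_assoc]
  rw [show (0:ℂ) = ∑ t ∈ Finset.range (d+1), (sterl d t : ℂ) * 0 by simp]
  refine Tendsto.congr (fun n => (key n).symm) ?_
  exact tendsto_finset_sum _ fun t _ => (aux_tendsto_choose hμ hlt t).const_mul _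
lemma aux_abs_exp (a b : ℝ) :
    ‖Complex.exp (-2 * (Real.pi:ℂ) * Complex.I * a * b)‖ = 1 := by
  have : (-2 * (Real.pi:ℂ) * Complex.I * a * b) = ((-2*Real.pi*a*b : ℝ):ℂ) * Complex.I := by
    push_cast; ring
  rw [this, Complex.norm_exp_ofReal_mul_I]

lemma aux_mu_ne_neg_one {h cc : ℝ} (hh : 0 < h)
    (hc : ¬ ∃ ν : ℤ, cc = 1/(2*h) + (ν:ℝ)/h) :
    Complex.exp (-2 * (Real.pi:ℂ) * Complex.I * cc * h) ≠ -1 := by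
  intro heq
  rw [← Complex.exp_pi_mul_I, Complex.exp_eq_exp_iff_exists_int] at heq
  obtain ⟨ν, hν⟩ := heq
  have h2 : ((-2*Real.pi*cc*h : ℝ) : ℂ) * Complex.I
      = ((Real.pi + ν*(2*Real.pi) : ℝ) : ℂ) * Complex.I := by
    push_cast at hν ⊢
    linear_combination hν
  have h3 : (-2*Real.pi*cc*h : ℝ) = Real.pi + ν*(2*Real.pi) := by
    have := mul_right_cancel₀ Complex.I_ne_zero h2
    exact_mod_cast this
  have h4 : Real.pi * (-2*cc*h) = Real.pi * (1 + 2*ν) := by ring_nf; ring_nf at h3; linarith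
  have h5 : -2*cc*h = 1 + 2*(ν:ℝ) := mul_left_cancel₀ (ne_of_gt Real.pi_pos) h4
  apply hc
  refine ⟨-ν-1, ?_⟩
  have hh' : h ≠ 0 := ne_of_gt hh
  push_cast
  have heq : (1/(2*h) + (-(ν:ℝ)-1)/h) = (-1-2*(ν:ℝ))/(2*h) := by
    field_simp
    ring
  rw [heq, eq_div_iff (by positivity : (2*h) ≠ 0)]
  linarith [h5]

lemma aux_exp_term (h : ℝ) (hh : 0 < h) (cc : ℝ)
    (hc : ¬ ∃ ν : ℤ, cc = 1/(2*h) + (ν:ℝ)/h) (Nn : ℕ) (y : ℝ) :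
    Tendsto (fun n : ℕ => (∑ k ∈ Finset.range (n+1), (n.choose k : ℂ) * (-1)^(n-k)
        * (Complex.exp (-2 * (Real.pi:ℂ) * Complex.I * cc * ((y + k*h : ℝ):ℂ))
            * (2 * (Real.pi:ℂ) * Complex.I * ((y + k*h : ℝ):ℂ))^Nn)) / 2^n)
      atTop (nhds 0) := by
  set μ : ℂ := Complex.exp (-2 * (Real.pi:ℂ) * Complex.I * cc * h) with hμ
  have hμabs : ‖μ‖ = 1 := aux_abs_exp cc h
  have hμne : μ ≠ -1 := aux_mu_ne_neg_one hh hc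
  have hlt : ‖μ - 1‖ < 2 := aux_norm_lt_two hμabs hμne
  set E : ℂ := Complex.exp (-2 * (Real.pi:ℂ) * Complex.I * cc * y) with hE
  set Cd : ℕ → ℂ := fun d => E * ((2 * (Real.pi:ℂ) * Complex.I)^Nn
      * ((h:ℂ)^d * (y:ℂ)^(Nn-d) * (Nn.choose d : ℂ))) with hCd
  have key : ∀ n : ℕ,
      (∑ k ∈ Finset.range (n+1), (n.choose k : ℂ) * (-1)^(n-k)
        * (Complex.exp (-2 * (Real.pi:ℂ) * Complex.I * cc * ((y + k*h : ℝ):ℂ))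
            * (2 * (Real.pi:ℂ) * Complex.I * ((y + k*h : ℝ):ℂ))^Nn)) / 2^n
      = ∑ d ∈ Finset.range (Nn+1), Cd d
          * ((∑ k ∈ Finset.range (n+1),
              (n.choose k : ℂ) * (-1)^(n-k) * μ^k * (k:ℂ)^d) / 2^n) := by
    intro n
    have step : (∑ k ∈ Finset.range (n+1), (n.choose k : ℂ) * (-1)^(n-k)
        * (Complex.exp (-2 * (Real.pi:ℂ) * Complex.I * cc * ((y + k*h : ℝ):ℂ))
            * (2 * (Real.pi:ℂ) * Complex.I * ((y + k*h : ℝ):ℂ))^Nn))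
        = ∑ d ∈ Finset.range (Nn+1), Cd d
          * ∑ k ∈ Finset.range (n+1), (n.choose k : ℂ) * (-1)^(n-k) * μ^k * (k:ℂ)^d := by
      calc ∑ k ∈ Finset.range (n+1), (n.choose k : ℂ) * (-1)^(n-k)
            * (Complex.exp (-2 * (Real.pi:ℂ) * Complex.I * cc * ((y + k*h : ℝ):ℂ))
              * (2 * (Real.pi:ℂ) * Complex.I * ((y + k*h : ℝ):ℂ))^Nn)
          = ∑ k ∈ Finset.range (n+1), ∑ d ∈ Finset.range (Nn+1),
              Cd d * ((n.choose k : ℂ) * (-1)^(n-k) * μ^k * (k:ℂ)^d) := by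
            refine Finset.sum_congr rfl fun k _ => ?_
            have hexp : Complex.exp (-2 * (Real.pi:ℂ) * Complex.I * cc * ((y + k*h : ℝ):ℂ))
                = E * μ^k := by
              rw [hE, hμ, ← Complex.exp_nat_mul, ← Complex.exp_add]
              congr 1
              push_cast
              ring
            have hpow : (2 * (Real.pi:ℂ) * Complex.I * ((y + k*h : ℝ):ℂ))^Nn
                = ∑ d ∈ Finset.range (Nn+1), (2 * (Real.pi:ℂ) * Complex.I)^Nn
                    * ((k:ℂ)^d * ((h:ℂ)^d * (y:ℂ)^(Nn-d) * (Nn.choose d : ℂ))) := by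
              have h1 : (2 * (Real.pi:ℂ) * Complex.I * ((y + k*h : ℝ):ℂ))
                  = (2 * (Real.pi:ℂ) * Complex.I) * ((k:ℂ)*(h:ℂ) + (y:ℂ)) := by
                push_cast; ring
              rw [h1, mul_pow, add_pow, Finset.mul_sum]
              refine Finset.sum_congr rfl fun d _ => ?_
              rw [mul_pow]; ring
            rw [hexp, hpow, Finset.mul_sum, Finset.mul_sum]
            refine Finset.sum_congr rfl fun d _ => ?_
            rw [hCd]
            ring
        _ = ∑ d ∈ Finset.range (Nn+1), Cd d
              * ∑ k ∈ Finset.range (n+1), (n.choose k : ℂ) * (-1)^(n-k) * μ^k * (k:ℂ)^d := by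
            rw [Finset.sum_comm]
            exact Finset.sum_congr rfl fun d _ => by rw [Finset.mul_sum]
    rw [step, Finset.sum_div]
    exact Finset.sum_congr rfl fun d _ => by rw [mul_div_assoc]
  rw [show (0:ℂ) = ∑ d ∈ Finset.range (Nn+1), Cd d * 0 by simp]
  refine Tendsto.congr (fun n => (key n).symm) ?_
  exact tendsto_finset_sum _ fun d _ =>
    (aux_tendsto_powsum hμabs.le hlt d).const_mul _
lemma aux_exp_meas (w : ℝ) :
    Continuous (fun x : ℝ => Complex.exp (-2 * (Real.pi:ℂ) * Complex.I * w * x)) := by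
  continuity

lemma aux_integrable (m : ℝ → ℂ) (hm : Measurable m) (hmi : Integrable m) (w : ℝ) :
    Integrable (fun x : ℝ => m x * Complex.exp (-2 * (Real.pi:ℂ) * Complex.I * w * x)) := by
  have h1 : Integrable (fun x : ℝ =>
      Complex.exp (-2 * (Real.pi:ℂ) * Complex.I * w * x) * m x) := by
    refine hmi.bdd_mul (c := 1) ((aux_exp_meas w).aestronglyMeasurable) ?_
    filter_upwards with x
    rw [aux_abs_exp w x]
  exact h1.congr (Eventually.of_forall fun x => mul_comm _ _)

lemma aux_integral_tendsto (h : ℝ) (hh : 0 < h) (m : ℝ → ℂ) (hm : Measurable m)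
    (hmi : Integrable m) (y : ℝ) :
    Tendsto (fun n : ℕ => (∑ k ∈ Finset.range (n+1), (n.choose k : ℂ) * (-1)^(n-k)
        * ∫ x : ℝ, m x * Complex.exp (-2 * (Real.pi:ℂ) * Complex.I * ((y + k*h : ℝ):ℂ) * x)) / 2^n)
      atTop (nhds 0) := by
  set u : ℝ → ℂ := fun x => Complex.exp (-2 * (Real.pi:ℂ) * Complex.I * x * h) with hu
  have hucont : Continuous u := by rw [hu]; continuity
  set G : ℕ → ℝ → ℂ := fun n x =>
    m x * Complex.exp (-2 * (Real.pi:ℂ) * Complex.I * y * x) * ((u x - 1)/2)^n with hG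
  have key : ∀ n : ℕ,
      (∑ k ∈ Finset.range (n+1), (n.choose k : ℂ) * (-1)^(n-k)
        * ∫ x : ℝ, m x * Complex.exp (-2 * (Real.pi:ℂ) * Complex.I * ((y + k*h : ℝ):ℂ) * x)) / 2^n
      = ∫ x : ℝ, G n x := by
    intro n
    have step1 : (∑ k ∈ Finset.range (n+1), (n.choose k : ℂ) * (-1)^(n-k)
        * ∫ x : ℝ, m x * Complex.exp (-2 * (Real.pi:ℂ) * Complex.I * ((y + k*h : ℝ):ℂ) * x))
        = ∫ x : ℝ, ∑ k ∈ Finset.range (n+1), (n.choose k : ℂ) * (-1)^(n-k)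
            * (m x * Complex.exp (-2 * (Real.pi:ℂ) * Complex.I * ((y + k*h : ℝ):ℂ) * x)) := by
      rw [integral_finset_sum _ (fun k _ => ((aux_integrable m hm hmi _).const_mul _))]
      exact Finset.sum_congr rfl fun k _ => (integral_const_mul _ _).symm
    rw [step1, ← integral_div]
    congr 1
    funext x
    have hexp : ∀ k : ℕ, Complex.exp (-2 * (Real.pi:ℂ) * Complex.I * ((y + k*h : ℝ):ℂ) * x)
        = Complex.exp (-2 * (Real.pi:ℂ) * Complex.I * y * x) * (u x)^k := by
      intro k
      rw [hu]
      simp only []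
      rw [← Complex.exp_nat_mul, ← Complex.exp_add]
      congr 1
      push_cast
      ring
    have step2 : ∑ k ∈ Finset.range (n+1), (n.choose k : ℂ) * (-1)^(n-k)
            * (m x * Complex.exp (-2 * (Real.pi:ℂ) * Complex.I * ((y + k*h : ℝ):ℂ) * x))
        = m x * Complex.exp (-2 * (Real.pi:ℂ) * Complex.I * y * x) * (u x - 1)^n := by
      rw [sub_eq_add_neg, add_pow, Finset.mul_sum]
      refine Finset.sum_congr rfl fun k _ => ?_
      rw [hexp k]
      ring
    rw [step2, hG]
    simp only []
    rw [div_pow, mul_div_assoc]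
  have hae : ∀ᵐ x : ℝ, ¬ ∃ ν : ℤ, x = 1/(2*h) + (ν:ℝ)/h := by
    have hbadset : (MeasureTheory.volume {x : ℝ | ∃ ν : ℤ, x = 1/(2*h) + (ν:ℝ)/h}) = 0 := by
      have hsub : {x : ℝ | ∃ ν : ℤ, x = 1/(2*h) + (ν:ℝ)/h}
          ⊆ Set.range (fun ν : ℤ => 1/(2*h) + (ν:ℝ)/h) := by
        rintro x ⟨ν, rfl⟩; exact ⟨ν, rfl⟩
      exact measure_mono_null hsub (Set.Countable.measure_zero (Set.countable_range _) _)
    have hm2 := MeasureTheory.compl_mem_ae_iff.mpr hbadset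
    filter_upwards [hm2] with x hx
    exact hx
  refine Tendsto.congr (fun n => (key n).symm) ?_
  have h0 : (0:ℂ) = ∫ _ : ℝ, (0:ℂ) := by simp
  rw [h0]
  refine MeasureTheory.tendsto_integral_of_dominated_convergence (fun x => ‖m x‖)
    ?_ hmi.norm ?_ ?_
  · intro n
    exact (hm.aestronglyMeasurable.mul (aux_exp_meas y).aestronglyMeasurable).mul
      ((((hucont.sub continuous_const).div_const 2).pow n).aestronglyMeasurable)
  · intro n
    filter_upwards with x
    rw [hG]
    simp only []
    rw [norm_mul, norm_mul, norm_pow,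
      aux_abs_exp y x, mul_one]
    have hq : ‖(u x - 1)/2‖ ≤ 1 := by
      rw [norm_div]
      have : ‖u x - 1‖ ≤ 2 := by
        calc ‖u x - 1‖ ≤ ‖u x‖ + ‖(1:ℂ)‖ := norm_sub_le _ _
          _ = 2 := by rw [aux_abs_exp x h]; norm_num
      rw [show ‖(2:ℂ)‖ = 2 by norm_num]
      linarith
    calc ‖m x‖ * ‖(u x - 1)/2‖^n ≤ ‖m x‖ * 1 :=
          mul_le_mul_of_nonneg_left (pow_le_one₀ (norm_nonneg _) hq) (norm_nonneg _)
      _ = ‖m x‖ := mul_one _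
  · filter_upwards [hae] with x hx
    have h1 : ‖u x‖ = 1 := aux_abs_exp x h
    have h2 : u x ≠ -1 := aux_mu_ne_neg_one hh hx
    have h3 : ‖u x - 1‖ < 2 := aux_norm_lt_two h1 h2
    have h4 : ‖(u x - 1)/2‖ < 1 := by
      rw [norm_div, show ‖(2:ℂ)‖ = 2 by norm_num]
      rw [div_lt_one (by norm_num : (0:ℝ) < 2)]
      exact h3
    have h5 := tendsto_pow_atTop_nhds_zero_of_norm_lt_one h4
    have h6 := h5.const_mul (m x * Complex.exp (-2 * (Real.pi:ℂ) * Complex.I * y * x))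
    rw [mul_zero] at h6
    exact h6
theorem forward_differences_little_o_two_pow
    (h : ℝ) (hh : 0 < h)
    (m : ℝ → ℂ) (hm : Measurable m) (hmi : Integrable m)
    (j : ℕ) (a : ℕ → ℂ) (N : ℕ → ℕ) (c : ℕ → ℝ)
    (hc : ∀ k ≤ j, ¬ ∃ ν : ℤ, c k = 1 / (2 * h) + (ν : ℝ) / h)
    (f : ℝ → ℂ)
    (hf : ∀ w : ℝ,
      f w = (∫ x : ℝ, m x * Complex.exp (-2 * (Real.pi : ℂ) * Complex.I * (w : ℂ) * (x : ℂ)))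
        + ∑ k ∈ Finset.range (j + 1),
            a k * Complex.exp (-2 * (Real.pi : ℂ) * Complex.I * (c k : ℂ) * (w : ℂ))
              * (2 * (Real.pi : ℂ) * Complex.I * (w : ℂ)) ^ (N k))
    (y : ℝ) :
    Tendsto (fun n : ℕ =>
        (∑ k ∈ Finset.range (n + 1),
          (n.choose k : ℂ) * (-1) ^ (n - k) * f (y + (k : ℝ) * h)) / 2 ^ n)
      atTop (nhds 0) := by
  have split : ∀ n : ℕ,
      (∑ k ∈ Finset.range (n + 1),
          (n.choose k : ℂ) * (-1) ^ (n - k) * f (y + (k : ℝ) * h)) / 2 ^ n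
      = (∑ k ∈ Finset.range (n+1), (n.choose k : ℂ) * (-1)^(n-k)
          * ∫ x : ℝ, m x * Complex.exp (-2 * (Real.pi:ℂ) * Complex.I * ((y + k*h : ℝ):ℂ) * x)) / 2^n
        + ∑ k' ∈ Finset.range (j+1), a k' *
            ((∑ k ∈ Finset.range (n+1), (n.choose k : ℂ) * (-1)^(n-k)
              * (Complex.exp (-2 * (Real.pi:ℂ) * Complex.I * (c k') * ((y + k*h : ℝ):ℂ))
                  * (2 * (Real.pi:ℂ) * Complex.I * ((y + k*h : ℝ):ℂ))^(N k'))) / 2^n) := by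
    intro n
    have step1 : ∑ k ∈ Finset.range (n + 1),
          (n.choose k : ℂ) * (-1) ^ (n - k) * f (y + (k : ℝ) * h)
        = (∑ k ∈ Finset.range (n+1), (n.choose k : ℂ) * (-1)^(n-k)
            * ∫ x : ℝ, m x * Complex.exp (-2 * (Real.pi:ℂ) * Complex.I * ((y + k*h : ℝ):ℂ) * x))
          + ∑ k' ∈ Finset.range (j+1),
              ∑ k ∈ Finset.range (n+1), a k' * ((n.choose k : ℂ) * (-1)^(n-k)
                * (Complex.exp (-2 * (Real.pi:ℂ) * Complex.I * (c k') * ((y + k*h : ℝ):ℂ))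
                  * (2 * (Real.pi:ℂ) * Complex.I * ((y + k*h : ℝ):ℂ))^(N k'))) := by
      have perk : ∀ k ∈ Finset.range (n+1),
          (n.choose k : ℂ) * (-1) ^ (n - k) * f (y + (k : ℝ) * h)
          = ((n.choose k : ℂ) * (-1)^(n-k)
              * ∫ x : ℝ, m x * Complex.exp (-2 * (Real.pi:ℂ) * Complex.I * ((y + k*h : ℝ):ℂ) * x))
            + ∑ k' ∈ Finset.range (j+1), a k' * ((n.choose k : ℂ) * (-1)^(n-k)
                * (Complex.exp (-2 * (Real.pi:ℂ) * Complex.I * (c k') * ((y + k*h : ℝ):ℂ))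
                  * (2 * (Real.pi:ℂ) * Complex.I * ((y + k*h : ℝ):ℂ))^(N k'))) := by
        intro k _
        rw [hf (y + (k : ℝ) * h), mul_add, Finset.mul_sum]
        congr 1
        refine Finset.sum_congr rfl fun k' _ => ?_
        ring
      rw [Finset.sum_congr rfl perk, Finset.sum_add_distrib]
      congr 1
      exact Finset.sum_comm
    rw [step1, add_div]
    congr 1
    rw [Finset.sum_div]
    refine Finset.sum_congr rfl fun k' _ => ?_
    rw [← Finset.mul_sum, mul_div_assoc]
  rw [show (0:ℂ) = 0 + ∑ k' ∈ Finset.range (j+1), a k' * 0 by simp]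
  refine Tendsto.congr (fun n => (split n).symm) ?_
  refine Tendsto.add (aux_integral_tendsto h hh m hm hmi y) ?_
  refine tendsto_finset_sum _ fun k' hk' => ?_
  exact (aux_exp_term h hh (c k')
    (hc k' (Nat.lt_succ_iff.mp (Finset.mem_range.1 hk'))) (N k') y).const_mul _
end
end
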